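/- arXiv:2106.07418 — 8 statements merged into one kernel-verified Lean document; each statement's English description precedes it below -/
import Mathlib

section
/- Let X be a subset of {1,...,n-1}. Define f_X(i) = #{j in X : j < i} + (n - i if i not in X, 0 if i in X) for i = 0,1,...,n. Then f_X is a bijection from {0,1,...,n} to {0,1,...,n}. -/
/-- For `X ⊆ {1,…,n-1}`, the map
`f_X(i) = #{j ∈ X : j < i} + (n - i if i ∉ X, 0 if i ∈ X)`
is a bijection from `{0,1,…,n}` to `{0,1,…,n}`. -/
theorem stmt_0 (n : ℕ) (hn : 0 < n) (X : Finset ℕ) (hX : X ⊆ Finset.Icc 1 (n - 1))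
    (f : ℕ → ℕ)
    (hf : ∀ i, f i = (X.filter (· < i)).card + (if i ∈ X then 0 else n - i)) :
    Set.BijOn f (Set.Iic n) (Set.Iic n) := by
  have hc_le : ∀ i, (X.filter (· < i)).card ≤ i := by
    intro i
    calc (X.filter (· < i)).card ≤ (Finset.range i).card := by
          apply Finset.card_le_card
          intro x hx
          exact Finset.mem_range.2 (Finset.mem_filter.1 hx).2
      _ = i := Finset.card_range i
  have hcX : ∀ i, (X.filter (· < i)).card ≤ n - 1 := by
    intro i
    calc (X.filter (· < i)).card ≤ X.card := Finset.card_le_card (Finset.filter_subset _ _)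
      _ ≤ (Finset.Icc 1 (n-1)).card := Finset.card_le_card hX
      _ = n - 1 := by simp [Nat.card_Icc]
  have hmemX : ∀ i ∈ X, 1 ≤ i ∧ i ≤ n - 1 := by
    intro i hi
    exact Finset.mem_Icc.1 (hX hi)
  have hmono : ∀ i j, i < j → i ∈ X →
      (X.filter (· < i)).card + 1 ≤ (X.filter (· < j)).card := by
    intro i j hij hi
    have : X.filter (· < i) ⊂ X.filter (· < j) := by
      constructor
      · intro x hx
        obtain ⟨h1, h2⟩ := Finset.mem_filter.1 hx
        exact Finset.mem_filter.2 ⟨h1, lt_trans h2 hij⟩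
      · intro h
        have := h (Finset.mem_filter.2 ⟨hi, hij⟩)
        have := (Finset.mem_filter.1 this).2
        omega
    have := Finset.card_lt_card this
    omega
  have hgap : ∀ i j, i < j → i ∉ X →
      (X.filter (· < j)).card ≤ (X.filter (· < i)).card + (j - (i+1)) := by
    intro i j hij hi
    calc (X.filter (· < j)).card
        ≤ (X.filter (· < i) ∪ Finset.Ico (i+1) j).card := by
          apply Finset.card_le_card
          intro x hx
          obtain ⟨hxX, hxj⟩ := Finset.mem_filter.1 hx
          rcases lt_or_ge x i with h | h
          · exact Finset.mem_union_left _ (Finset.mem_filter.2 ⟨hxX, h⟩)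
          · have : x ≠ i := fun h => hi (h ▸ hxX)
            exact Finset.mem_union_right _ (Finset.mem_Ico.2 ⟨by omega, hxj⟩)
      _ ≤ (X.filter (· < i)).card + (Finset.Ico (i+1) j).card := Finset.card_union_le _ _
      _ = (X.filter (· < i)).card + (j - (i+1)) := by rw [Nat.card_Ico]
  have key : ∀ i j, i ≤ n → j ≤ n → i < j → f i ≠ f j := by
    intro i j hi hj hij hfij
    rw [hf i, hf j] at hfij
    by_cases hiX : i ∈ X <;> by_cases hjX : j ∈ X <;>
      simp only [hiX, hjX, if_pos, if_neg, if_true, if_false] at hfij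
    · have := hmono i j hij hiX; omega
    · have := hmono i j hij hiX; omega
    · have := hgap i j hij hiX
      have := hmemX j hjX
      omega
    · have := hgap i j hij hiX
      omega
  have hmaps : Set.MapsTo f (Set.Iic n) (Set.Iic n) := by
    intro i hi
    simp only [Set.mem_Iic] at hi ⊢
    rw [hf i]
    by_cases hiX : i ∈ X <;> simp only [hiX, if_true, if_false]
    · have := hcX i; omega
    · have := hc_le i; omega
  have hinj : Set.InjOn f (Set.Iic n) := by
    intro i hi j hj hfij
    simp only [Set.mem_Iic] at hi hj
    rcases lt_trichotomy i j with h | h | h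
    · exact absurd hfij (key i j hi hj h)
    · exact h
    · exact absurd hfij.symm (key j i hj hi h)
  exact ((Set.finite_Iic n).injOn_iff_bijOn_of_mapsTo hmaps).1 hinj
end

section
/- For any subset X of {1,...,n-1}, the sum over i = 0,...,n of q^{f_X(i)} equals [n+1]_q = 1 + q + ... + q^n, where f_X(i) = #{j in X : j < i} + (n - i if i not in X, 0 if i in X). -/
/-- For `X ⊆ {1,…,n-1}`,
`∑_{i=0}^{n} q^{f_X(i)} = 1 + q + ⋯ + q^n`, where
`f_X(i) = #{j ∈ X : j < i} + (n - i if i ∉ X, 0 if i ∈ X)`. -/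
theorem stmt_1 {R : Type*} [CommRing R] (q : R) (n : ℕ) (hn : 0 < n)
    (X : Finset ℕ) (hX : X ⊆ Finset.Icc 1 (n - 1)) :
    ∑ i ∈ Finset.range (n + 1),
        q ^ ((X.filter (· < i)).card + (if i ∈ X then 0 else n - i))
      = ∑ i ∈ Finset.range (n + 1), q ^ i := by
  set f : ℕ → ℕ := fun i => (X.filter (· < i)).card + (if i ∈ X then 0 else n - i) with hf
  have hc_le : ∀ i, (X.filter (· < i)).card ≤ i := by
    intro i
    calc (X.filter (· < i)).card ≤ (Finset.range i).card := by
          apply Finset.card_le_card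
          intro j hj
          simp only [Finset.mem_filter] at hj
          simpa using hj.2
      _ = i := Finset.card_range i
  have key1 : ∀ a b : ℕ, a ∈ X → a < b →
      (X.filter (· < a)).card + 1 ≤ (X.filter (· < b)).card := by
    intro a b ha hab
    have hins : insert a (X.filter (· < a)) ⊆ X.filter (· < b) := by
      intro j hj
      rcases Finset.mem_insert.mp hj with rfl | hj
      · exact Finset.mem_filter.mpr ⟨ha, hab⟩
      · rcases Finset.mem_filter.mp hj with ⟨hjX, hja⟩
        exact Finset.mem_filter.mpr ⟨hjX, lt_trans hja hab⟩
    have hna : a ∉ X.filter (· < a) := by simp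
    calc (X.filter (· < a)).card + 1 = (insert a (X.filter (· < a))).card :=
          (Finset.card_insert_of_notMem hna).symm
      _ ≤ (X.filter (· < b)).card := Finset.card_le_card hins
  have key2 : ∀ a b : ℕ, a ∉ X → a < b →
      (X.filter (· < b)).card ≤ (X.filter (· < a)).card + (b - a - 1) := by
    intro a b ha hab
    have hsub : X.filter (· < b) ⊆ (X.filter (· < a)) ∪ Finset.Ico (a + 1) b := by
      intro j hj
      rcases Finset.mem_filter.mp hj with ⟨hjX, hjb⟩
      by_cases hja : j < a
      · exact Finset.mem_union_left _ (Finset.mem_filter.mpr ⟨hjX, hja⟩)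
      · have hjne : j ≠ a := by rintro rfl; exact ha hjX
        apply Finset.mem_union_right
        simp only [Finset.mem_Ico]
        omega
    calc (X.filter (· < b)).card ≤ ((X.filter (· < a)) ∪ Finset.Ico (a + 1) b).card :=
          Finset.card_le_card hsub
      _ ≤ (X.filter (· < a)).card + (Finset.Ico (a + 1) b).card := Finset.card_union_le _ _
      _ = (X.filter (· < a)).card + (b - a - 1) := by rw [Nat.card_Ico]; omega
  have helper : ∀ a b : ℕ, a < b → b ≤ n → f a ≠ f b := by
    intro a b hab hbn
    simp only [hf]
    by_cases ha : a ∈ X <;> by_cases hb : b ∈ X <;> simp only [ha, hb, if_pos, if_neg,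
      if_true, if_false, not_false_iff]
    · have := key1 a b ha hab; omega
    · have := key1 a b ha hab; omega
    · have := key2 a b ha hab; omega
    · have := key2 a b ha hab; omega
  have hinj : Set.InjOn f (Finset.range (n + 1) : Finset ℕ) := by
    intro a ha b hb hfab
    simp only [Finset.coe_range, Set.mem_Iio] at ha hb
    by_contra hne
    rcases Nat.lt_or_ge a b with h | h
    · exact helper a b h (by omega) hfab
    · have h' : b < a := by omega
      exact helper b a h' (by omega) hfab.symm
  have hmaps : ∀ i ∈ Finset.range (n + 1), f i ∈ Finset.range (n + 1) := by
    intro i hi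
    simp only [Finset.mem_range] at hi ⊢
    have := hc_le i
    simp only [hf]
    by_cases h : i ∈ X <;> simp [h] <;> omega
  have himg : (Finset.range (n + 1)).image f = Finset.range (n + 1) := by
    apply Finset.eq_of_subset_of_card_le
    · intro y hy
      rcases Finset.mem_image.mp hy with ⟨i, hi, rfl⟩
      exact hmaps i hi
    · rw [Finset.card_image_of_injOn hinj]
  calc ∑ i ∈ Finset.range (n + 1), q ^ f i
      = ∑ j ∈ (Finset.range (n + 1)).image f, q ^ j :=
        (Finset.sum_image fun x hx y hy h => hinj hx hy h).symm
    _ = ∑ i ∈ Finset.range (n + 1), q ^ i := by rw [himg]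
end

section
/- For a finite poset P with n elements and a fixed natural labeling, the sum over all linear extensions T of P and all i = 0,...,n of q^{comaj(T,i)} · q^{#{j ∈ Des(T) : j < i}} equals [n+1]_q times the sum over all linear extensions T of q^{comaj(T)}, where comaj(T,i) = Σ_{j ∈ Des(T) ∪ {i}} (n - j). -/
open scoped Classical

namespace Stmt2Aux

def dD (D : Finset ℕ) (i : ℕ) : ℕ := (D.filter (· < i)).card

def gD (n : ℕ) (D : Finset ℕ) (i : ℕ) : ℕ :=
  if i ∈ D then dD D i else n - i + dD D i

lemma dle (n : ℕ) (D : Finset ℕ) (hD : D ⊆ Finset.Ico 1 n) (i : ℕ) :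
    dD D i ≤ i - 1 := by
  have h : D.filter (· < i) ⊆ Finset.Ico 1 i := by
    intro j hj
    simp only [Finset.mem_filter] at hj
    have := Finset.mem_Ico.1 (hD hj.1)
    exact Finset.mem_Ico.2 ⟨this.1, hj.2⟩
  simpa [dD] using Finset.card_le_card h

lemma dmono (D : Finset ℕ) {a b : ℕ} (hab : a < b) (ha : a ∈ D) :
    dD D a < dD D b := by
  have h : insert a (D.filter (· < a)) ⊆ D.filter (· < b) := by
    intro j hj
    rcases Finset.mem_insert.1 hj with rfl | hj
    · exact Finset.mem_filter.2 ⟨ha, hab⟩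
    · simp only [Finset.mem_filter] at hj ⊢
      exact ⟨hj.1, hj.2.trans hab⟩
  have h2 := Finset.card_le_card h
  rw [Finset.card_insert_of_notMem (by simp)] at h2
  simpa [dD] using h2

lemma dgap (D : Finset ℕ) {a b : ℕ} (hab : a < b) (ha : a ∉ D) :
    dD D b ≤ dD D a + (b - a - 1) := by
  have h : D.filter (· < b) ⊆ D.filter (· < a) ∪ Finset.Ico (a + 1) b := by
    intro j hj
    simp only [Finset.mem_filter, Finset.mem_union, Finset.mem_Ico] at hj ⊢
    have hja : j ≠ a := fun h => ha (h ▸ hj.1)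
    by_cases hlt : j < a
    · exact Or.inl ⟨hj.1, hlt⟩
    · exact Or.inr ⟨by omega, hj.2⟩
  have := (Finset.card_le_card h).trans (Finset.card_union_le _ _)
  simpa [dD, Nat.card_Ico, Nat.sub_sub] using this

lemma gle (n : ℕ) (D : Finset ℕ) (hD : D ⊆ Finset.Ico 1 n) (i : ℕ)
    (hi : i ≤ n) : gD n D i ≤ n := by
  have h1 := dle n D hD i
  by_cases hmem : i ∈ D
  · have := Finset.mem_Ico.1 (hD hmem)
    simp only [gD, if_pos hmem]; omega
  · simp only [gD, if_neg hmem]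
    rcases Nat.eq_zero_or_pos i with rfl | hpos
    · have : dD D 0 = 0 := by simp [dD, Finset.filter_eq_empty_iff]
      omega
    · omega

lemma gne (n : ℕ) (D : Finset ℕ) (hD : D ⊆ Finset.Ico 1 n) {a b : ℕ}
    (hab : a < b) (hb : b ≤ n) : gD n D a ≠ gD n D b := by
  have han : a < n := lt_of_lt_of_le hab hb
  by_cases ha : a ∈ D <;> by_cases hbm : b ∈ D <;>
    simp only [gD, if_pos, if_neg, ha, hbm, if_true, if_false]
  · have := dmono D hab ha; omega
  · have := dmono D hab ha; omega
  · have := dgap D hab ha; omega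
  · have := dgap D hab ha; omega

lemma key_sum {R : Type*} [CommRing R] (n : ℕ) (D : Finset ℕ)
    (hD : D ⊆ Finset.Ico 1 n) (q : R) :
    ∑ i ∈ Finset.range (n + 1),
        q ^ ((∑ j ∈ insert i D, (n - j)) + (D.filter (· < i)).card)
      = ∑ k ∈ Finset.range (n + 1), q ^ (k + ∑ j ∈ D, (n - j)) := by
  have hinj : ∀ a ∈ Finset.range (n + 1), ∀ b ∈ Finset.range (n + 1),
      gD n D a = gD n D b → a = b := by
    intro a ha b hb h
    simp only [Finset.mem_range] at ha hb
    rcases lt_trichotomy a b with h' | h' | h'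
    · exact absurd h (gne n D hD h' (by omega))
    · exact h'
    · exact absurd h.symm (gne n D hD h' (by omega))
  have himg : (Finset.range (n + 1)).image (gD n D) = Finset.range (n + 1) := by
    apply Finset.eq_of_subset_of_card_le
    · intro x hx
      rcases Finset.mem_image.1 hx with ⟨i, hi, rfl⟩
      simp only [Finset.mem_range] at hi ⊢
      have := gle n D hD i (by omega)
      omega
    · rw [Finset.card_image_of_injOn (fun a ha b hb h => hinj a ha b hb h)]
  calc ∑ i ∈ Finset.range (n + 1),
        q ^ ((∑ j ∈ insert i D, (n - j)) + (D.filter (· < i)).card)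
      = ∑ i ∈ Finset.range (n + 1), q ^ (gD n D i + ∑ j ∈ D, (n - j)) := by
        apply Finset.sum_congr rfl
        intro i _
        congr 1
        by_cases hmem : i ∈ D
        · rw [Finset.insert_eq_self.2 hmem]
          simp only [gD, if_pos hmem, dD]
          omega
        · rw [Finset.sum_insert hmem]
          simp only [gD, if_neg hmem, dD]
          omega
    _ = ∑ k ∈ (Finset.range (n + 1)).image (gD n D), q ^ (k + ∑ j ∈ D, (n - j)) := by
        rw [Finset.sum_image (fun a ha b hb h => hinj a ha b hb h)]
    _ = ∑ k ∈ Finset.range (n + 1), q ^ (k + ∑ j ∈ D, (n - j)) := by rw [himg]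

end Stmt2Aux


/-- A linear extension of a finite poset `P` with `n` elements, encoded as an
order-preserving bijection `P ≃ Fin n`. -/
def IsLinExt {P : Type*} [PartialOrder P] {n : ℕ} (T : P ≃ Fin n) : Prop :=
  ∀ p q : P, p ≤ q → T p ≤ T q

/-- The descent set of a linear extension `T` with respect to the natural labeling `ω`:
those `i ∈ {1,…,n-1}` with `ω(T⁻¹(i)) > ω(T⁻¹(i+1))` (values `i`, `i+1` sit at
0-indexed positions `i-1`, `i`). -/
noncomputable def Des {P : Type*} [PartialOrder P] {n : ℕ} (ω T : P ≃ Fin n) : Finset ℕ :=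
  (Finset.Ico 1 n).filter fun i =>
    ∀ h : i < n, ω (T.symm ⟨i, h⟩) < ω (T.symm ⟨i - 1, lt_of_le_of_lt (Nat.sub_le i 1) h⟩)

/-- comaj(T) = Σ_{j ∈ Des(T)} (n - j). -/
noncomputable def comaj {P : Type*} [PartialOrder P] {n : ℕ} (ω T : P ≃ Fin n) : ℕ :=
  ∑ j ∈ Des ω T, (n - j)

/-- comaj(T,i) = Σ_{j ∈ Des(T) ∪ {i}} (n - j). -/
noncomputable def comaj' {P : Type*} [PartialOrder P] {n : ℕ} (ω T : P ≃ Fin n) (i : ℕ) : ℕ :=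
  ∑ j ∈ insert i (Des ω T), (n - j)

/-- `∑_{T ∈ L(P)} ∑_{i=0}^{n} q^{comaj(T,i)} q^{#{j ∈ Des(T) : j < i}}
  = [n+1]_q · ∑_{T ∈ L(P)} q^{comaj(T)}`. -/
theorem stmt_2 {P : Type*} [Fintype P] [DecidableEq P] [PartialOrder P]
    {R : Type*} [CommRing R] (q : R) (n : ℕ) (hcard : Fintype.card P = n)
    (ω : P ≃ Fin n) (hω : IsLinExt ω) :
    ∑ T ∈ Finset.univ.filter (fun T : P ≃ Fin n => IsLinExt T),
        ∑ i ∈ Finset.range (n + 1),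
          q ^ comaj' ω T i * q ^ ((Des ω T).filter (· < i)).card
      = (∑ i ∈ Finset.range (n + 1), q ^ i) *
          ∑ T ∈ Finset.univ.filter (fun T : P ≃ Fin n => IsLinExt T), q ^ comaj ω T := by
  calc ∑ T ∈ Finset.univ.filter (fun T : P ≃ Fin n => IsLinExt T),
        ∑ i ∈ Finset.range (n + 1),
          q ^ comaj' ω T i * q ^ ((Des ω T).filter (· < i)).card
      = ∑ T ∈ Finset.univ.filter (fun T : P ≃ Fin n => IsLinExt T),
          ∑ k ∈ Finset.range (n + 1), q ^ (k + comaj ω T) := by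
        apply Finset.sum_congr rfl
        intro T _
        simp only [comaj', comaj, ← pow_add]
        exact Stmt2Aux.key_sum n (Des ω T) (Finset.filter_subset _ _) q
    _ = (∑ i ∈ Finset.range (n + 1), q ^ i) *
          ∑ T ∈ Finset.univ.filter (fun T : P ≃ Fin n => IsLinExt T), q ^ comaj ω T := by
        rw [Finset.mul_sum]
        apply Finset.sum_congr rfl
        intro T _
        rw [Finset.sum_mul]
        exact Finset.sum_congr rfl fun k _ => by rw [pow_add]
end

section
/- There is a bijection between barely set-valued linear extensions S of a finite poset P with n elements and triples (T, i, p) where T is a linear extension of P, i ∈ {0,1,...,n}, and p is a maximal element of T⁻¹({1,...,i}). -/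
/-- A barely set-valued linear extension of a poset `P` with `n` elements:
the (nonempty, finite) entries `S p` partition `{1,…,n+1}`, exactly one element
carries a doubleton while all others carry singletons, and `max S(p) < min S(q)`
whenever `p < q` (equivalently: every entry of `S p` is less than every entry of `S q`). -/
def IsBSVLinExt {P : Type*} [PartialOrder P] (n : ℕ) (S : P → Finset ℕ) : Prop :=
  (∀ p, (S p).Nonempty) ∧
  (∀ k, k ∈ Finset.Icc 1 (n + 1) ↔ ∃ p, k ∈ S p) ∧
  (∀ p q, p ≠ q → Disjoint (S p) (S q)) ∧
  (∃ p₀, (S p₀).card = 2 ∧ ∀ p, p ≠ p₀ → (S p).card = 1) ∧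
  (∀ p q, p < q → ∀ a ∈ S p, ∀ b ∈ S q, a < b)

namespace Stmt3Proof

def gmap (i v : ℕ) : ℕ := if v < i then v + 1 else v + 2

theorem gmap_inj {i v w : ℕ} (h : gmap i v = gmap i w) : v = w := by
  unfold gmap at h; split at h <;> split at h <;> omega

theorem gmap_ne {i v : ℕ} : gmap i v ≠ i + 1 := by
  unfold gmap; split <;> omega

theorem gmap_mono {i v w : ℕ} (h : v < w) : gmap i v < gmap i w := by
  unfold gmap; split <;> split <;> omega

variable {P : Type*} [PartialOrder P] {n : ℕ}

open Classical in
noncomputable def Fmap (x : (P ≃ Fin n) × ℕ × P) : P → Finset ℕ :=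
  fun q => if q = x.2.2 then {(x.1 x.2.2 : ℕ) + 1, x.2.1 + 1} else {gmap x.2.1 (x.1 q)}

theorem Fmap_bsv (x : (P ≃ Fin n) × ℕ × P)
    (h1 : IsLinExt x.1) (h2 : x.2.1 ≤ n) (h3 : (x.1 x.2.2 : ℕ) < x.2.1)
    (h4 : ∀ z : P, (x.1 z : ℕ) < x.2.1 → ¬ x.2.2 < z) :
    IsBSVLinExt n (Fmap x) := by
  obtain ⟨T, i, p⟩ := x
  simp only at h1 h2 h3 h4
  have hval : ∀ a b : P, a ≠ b → (T a : ℕ) ≠ (T b : ℕ) :=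
    fun a b hab h => hab (T.injective (Fin.ext h))
  refine ⟨?_, ?_, ?_, ?_, ?_⟩
  · intro q
    unfold Fmap
    split
    · exact Finset.insert_nonempty _ _
    · exact Finset.singleton_nonempty _
  · intro k
    constructor
    · intro hk
      rw [Finset.mem_Icc] at hk
      by_cases hki : k = i + 1
      · exact ⟨p, by simp [Fmap, hki]⟩
      · obtain ⟨v, hvn, hv⟩ : ∃ v, v < n ∧ gmap i v = k := by
          unfold gmap
          by_cases hk2 : k ≤ i
          · exact ⟨k - 1, by omega, by rw [if_pos (by omega)]; omega⟩
          · exact ⟨k - 2, by omega, by rw [if_neg (by omega)]; omega⟩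
        set q := T.symm ⟨v, hvn⟩ with hqdef
        have htq : (T q : ℕ) = v := by simp [hqdef]
        by_cases hqp : q = p
        · refine ⟨p, ?_⟩
          have hTp : (T p : ℕ) = v := by rw [← hqp, htq]
          have hg : gmap i v = v + 1 := by unfold gmap; rw [if_pos (by omega)]
          simp [Fmap]
          left; omega
        · exact ⟨q, by simp [Fmap, hqp, htq, hv]⟩
    · rintro ⟨q, hq⟩
      rw [Finset.mem_Icc]
      have hqn : (T q : ℕ) < n := (T q).isLt
      have hpn : (T p : ℕ) < n := (T p).isLt
      simp only [Fmap] at hq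
      split at hq
      · simp only [Finset.mem_insert, Finset.mem_singleton] at hq
        omega
      · simp only [Finset.mem_singleton] at hq
        unfold gmap at hq; split at hq <;> omega
  · intro q q' hne
    rw [Finset.disjoint_left]
    intro a ha ha'
    simp only [Fmap] at ha ha'
    have hg : gmap i ((T p : ℕ)) = (T p : ℕ) + 1 := by unfold gmap; rw [if_pos h3]
    by_cases hqp : q = p <;> by_cases hq'p : q' = p
    · exact hne (hqp.trans hq'p.symm)
    · rw [if_pos hqp, Finset.mem_insert, Finset.mem_singleton] at ha
      rw [if_neg hq'p, Finset.mem_singleton] at ha'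
      rcases ha with h | h
      · exact hval q' p hq'p (gmap_inj (ha'.symm.trans (h.trans hg.symm)))
      · exact gmap_ne (ha'.symm.trans h)
    · rw [if_pos hq'p, Finset.mem_insert, Finset.mem_singleton] at ha'
      rw [if_neg hqp, Finset.mem_singleton] at ha
      rcases ha' with h | h
      · exact hval q p hqp (gmap_inj (ha.symm.trans (h.trans hg.symm)))
      · exact gmap_ne (ha.symm.trans h)
    · rw [if_neg hqp, Finset.mem_singleton] at ha
      rw [if_neg hq'p, Finset.mem_singleton] at ha'
      exact hval q q' hne (gmap_inj (ha.symm.trans ha'))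
  · refine ⟨p, ?_, ?_⟩
    · show (Fmap (T, i, p) p).card = 2
      rw [show Fmap (T, i, p) p = {(T p : ℕ) + 1, i + 1} from if_pos rfl]
      exact Finset.card_pair (by omega)
    · intro q hq
      show (Fmap (T, i, p) q).card = 1
      simp only [Fmap, if_neg hq]
      exact Finset.card_singleton _
  · intro q q' hlt a ha b hb
    have hne : q ≠ q' := ne_of_lt hlt
    have hTlt : (T q : ℕ) < (T q' : ℕ) :=
      lt_of_le_of_ne (h1 q q' hlt.le) (hval q q' hne)
    simp only [Fmap] at ha hb
    by_cases hqp : q = p <;> by_cases hq'p : q' = p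
    · exact absurd (hqp.trans hq'p.symm) hne
    · rw [if_pos hqp, Finset.mem_insert, Finset.mem_singleton] at ha
      rw [if_neg hq'p, Finset.mem_singleton] at hb
      have hq'i : ¬ ((T q' : ℕ) < i) := fun h => h4 q' h (hqp ▸ hlt)
      have : gmap i ((T q' : ℕ)) = (T q' : ℕ) + 2 := by unfold gmap; rw [if_neg hq'i]
      subst hqp
      rcases ha with h | h <;> omega
    · rw [if_pos hq'p, Finset.mem_insert, Finset.mem_singleton] at hb
      rw [if_neg hqp, Finset.mem_singleton] at ha
      subst hq'p
      have : gmap i ((T q : ℕ)) = (T q : ℕ) + 1 := by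
        unfold gmap; rw [if_pos (by omega)]
      rcases hb with h | h <;> omega
    · rw [if_neg hqp, Finset.mem_singleton] at ha
      rw [if_neg hq'p, Finset.mem_singleton] at hb
      rw [ha, hb]
      exact gmap_mono hTlt

theorem Fmap_inj (x y : (P ≃ Fin n) × ℕ × P)
    (hx3 : (x.1 x.2.2 : ℕ) < x.2.1) (hy3 : (y.1 y.2.2 : ℕ) < y.2.1)
    (h : Fmap x = Fmap y) : x = y := by
  obtain ⟨T, i, p⟩ := x
  obtain ⟨T', i', p'⟩ := y
  simp only at hx3 hy3
  have hpp : p = p' := by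
    by_contra hne
    have h1 := congrFun h p
    have hc2 : (Fmap (T, i, p) p).card = 2 := by
      rw [show Fmap (T, i, p) p = {(T p : ℕ) + 1, i + 1} from if_pos rfl]
      exact Finset.card_pair (by omega)
    have hc1 : (Fmap (T', i', p') p).card = 1 := by
      rw [show Fmap (T', i', p') p = {gmap i' (T' p)} from if_neg hne]
      exact Finset.card_singleton _
    rw [h1, hc1] at hc2; omega
  subst hpp
  have hmem := congrFun h p
  rw [show Fmap (T, i, p) p = {(T p : ℕ) + 1, i + 1} from if_pos rfl,
     show Fmap (T', i', p) p = {(T' p : ℕ) + 1, i' + 1} from if_pos rfl] at hmem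
  have e1 : (T p : ℕ) + 1 = (T' p : ℕ) + 1 ∨ (T p : ℕ) + 1 = i' + 1 := by
    have := hmem ▸ Finset.mem_insert_self ((T p : ℕ) + 1) {i + 1}
    simpa using this
  have e2 : i + 1 = (T' p : ℕ) + 1 ∨ i + 1 = i' + 1 := by
    have : (i + 1) ∈ ({(T p : ℕ) + 1, i + 1} : Finset ℕ) := by simp
    rw [hmem] at this
    simpa using this
  have hi : i = i' := by omega
  have hTp : (T p : ℕ) = (T' p : ℕ) := by omega
  have hTval : ∀ q : P, (T q : ℕ) = (T' q : ℕ) := by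
    intro q
    by_cases hq : q = p
    · rw [hq]; exact hTp
    · have h1 := congrFun h q
      rw [show Fmap (T, i, p) q = {gmap i (T q)} from if_neg hq,
         show Fmap (T', i', p) q = {gmap i' (T' q)} from if_neg hq] at h1
      have := Finset.singleton_injective h1
      rw [← hi] at this
      exact gmap_inj this
  have hT : T = T' := Equiv.ext fun q => Fin.ext (hTval q)
  rw [hi, hT]

/-- The inverse shift. -/
def adj (i v : ℕ) : ℕ := if v < i then v - 1 else v - 2

theorem Fmap_surj [Fintype P] (hcard : Fintype.card P = n)
    (S : P → Finset ℕ) (hS : IsBSVLinExt n S) :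
    ∃ x : (P ≃ Fin n) × ℕ × P,
      (IsLinExt x.1 ∧ x.2.1 ≤ n ∧ (x.1 x.2.2 : ℕ) < x.2.1 ∧
        ∀ z : P, (x.1 z : ℕ) < x.2.1 → ¬ x.2.2 < z) ∧ Fmap x = S := by
  obtain ⟨hne, hcov, hdisj, ⟨p₀, hp2, hp1⟩, hord⟩ := hS
  set m : P → ℕ := fun q => (S q).min' (hne q) with hm
  set istar : ℕ := (S p₀).max' (hne p₀) with histar
  have hmmem : ∀ q, m q ∈ S q := fun q => Finset.min'_mem _ _
  have histarmem : istar ∈ S p₀ := Finset.max'_mem _ _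
  have hbound : ∀ q, ∀ k ∈ S q, 1 ≤ k ∧ k ≤ n + 1 := by
    intro q k hk
    have := (hcov k).mpr ⟨q, hk⟩
    rwa [Finset.mem_Icc] at this
  have hmin_lt : m p₀ < istar := Finset.min'_lt_max'_of_card _ (by omega)
  have hsingle : ∀ q, q ≠ p₀ → S q = {m q} := by
    intro q hq
    obtain ⟨a, ha⟩ := Finset.card_eq_one.mp (hp1 q hq)
    have : m q = a := by have := hmmem q; rw [ha] at this; simpa using this
    rw [ha, this]
  have hmne : ∀ q, m q ≠ istar := by
    intro q
    by_cases hq : q = p₀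
    · subst hq; omega
    · intro hEq
      exact (Finset.disjoint_left.mp (hdisj q p₀ hq)) (hEq ▸ hmmem q) histarmem
  have hminj : ∀ q q', q ≠ q' → m q ≠ m q' := by
    intro q q' hq hEq
    exact (Finset.disjoint_left.mp (hdisj q q' hq)) (hmmem q) (hEq ▸ hmmem q')
  have hb : ∀ q, 1 ≤ m q ∧ m q ≤ n + 1 := fun q => hbound q _ (hmmem q)
  have hbi : 1 ≤ istar ∧ istar ≤ n + 1 := hbound p₀ _ histarmem
  have hi2 : 2 ≤ istar := by have := hb p₀; omega
  have hn1 : 1 ≤ n := by have := hb p₀; omega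
  have hadjlt : ∀ q, adj istar (m q) < n := by
    intro q
    have h1 := hb q; have h2 := hmne q
    unfold adj; split <;> omega
  set u : P → Fin n := fun q => ⟨adj istar (m q), hadjlt q⟩ with hu
  have huinj : Function.Injective u := by
    intro q q' hEq
    by_contra hne'
    have h1 := hb q; have h2 := hb q'
    have h3 := hmne q; have h4 := hmne q'
    have h5 := hminj q q' hne'
    have hv : adj istar (m q) = adj istar (m q') := congrArg Fin.val hEq
    unfold adj at hv
    split at hv <;> split at hv <;> omega
  have hubij : Function.Bijective u :=
    (Fintype.bijective_iff_injective_and_card u).mpr ⟨huinj, by simp [hcard]⟩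
  set T := Equiv.ofBijective u hubij with hT
  have hTval : ∀ q, (T q : ℕ) = adj istar (m q) := fun q => rfl
  have hmlt : ∀ {a b : P}, a < b → m a < m b :=
    fun {a b} hab => hord a b hab _ (hmmem a) _ (hmmem b)
  refine ⟨(T, istar - 1, p₀), ⟨?_, ?_, ?_, ?_⟩, ?_⟩
  · intro a b hab
    rcases eq_or_lt_of_le hab with h | h
    · rw [h]
    · have hmab := hmlt h
      have h1 := hb a; have h3 := hmne a; have h4 := hmne b
      show (T a : ℕ) ≤ (T b : ℕ)
      rw [hTval, hTval]
      unfold adj; split <;> split <;> omega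
  · show istar - 1 ≤ n; omega
  · show (T p₀ : ℕ) < istar - 1
    rw [hTval]
    unfold adj; rw [if_pos hmin_lt]
    have := hb p₀; omega
  · intro z hz hlt
    have hzi : istar < m z := hord p₀ z hlt _ histarmem _ (hmmem z)
    have hz : (T z : ℕ) < istar - 1 := hz
    rw [hTval] at hz
    unfold adj at hz
    split at hz <;> omega
  · funext q
    by_cases hq : q = p₀
    · rw [hq]
      have e1 : (T p₀ : ℕ) + 1 = m p₀ := by
        rw [hTval]; unfold adj; rw [if_pos hmin_lt]; have := hb p₀; omega
      have e2 : istar - 1 + 1 = istar := by omega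
      rw [show Fmap (T, istar - 1, p₀) p₀ = {(T p₀ : ℕ) + 1, istar - 1 + 1} from if_pos rfl,
        e1, e2]
      have hsub : ({m p₀, istar} : Finset ℕ) ⊆ S p₀ := by
        intro k hk
        rcases Finset.mem_insert.mp hk with h | h
        · rw [h]; exact hmmem p₀
        · rw [Finset.mem_singleton] at h; rw [h]; exact histarmem
      have hc : ({m p₀, istar} : Finset ℕ).card = 2 := Finset.card_pair (by omega)
      exact Finset.eq_of_subset_of_card_le hsub (by omega)
    · rw [show Fmap (T, istar - 1, p₀) q = {gmap (istar - 1) (T q)} from if_neg hq,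
        hsingle q hq]
      congr 1
      rw [hTval]
      have h1 := hb q; have h2 := hmne q
      by_cases hc : m q < istar
      · unfold adj; rw [if_pos hc]
        unfold gmap; rw [if_pos (by omega)]; omega
      · unfold adj; rw [if_neg hc]
        unfold gmap; rw [if_neg (by omega)]; omega


end Stmt3Proof

/-- barely set-valued linear extensions of `P` are in bijection with
triples `(T, i, p)` where `T` is a linear extension, `i ∈ {0,…,n}`, and `p` is a
maximal element of the order ideal `T⁻¹({1,…,i})`. -/
theorem stmt_3 {P : Type*} [Fintype P] [PartialOrder P] (n : ℕ)
    (hcard : Fintype.card P = n) :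
    Nonempty
      ({S : P → Finset ℕ // IsBSVLinExt n S} ≃
        {x : (P ≃ Fin n) × ℕ × P //
          IsLinExt x.1 ∧ x.2.1 ≤ n ∧
          (x.1 x.2.2 : ℕ) < x.2.1 ∧ ∀ z : P, (x.1 z : ℕ) < x.2.1 → ¬ x.2.2 < z}) := by
  refine ⟨(Equiv.ofBijective (fun x => ⟨Stmt3Proof.Fmap x.1,
    Stmt3Proof.Fmap_bsv x.1 x.2.1 x.2.2.1 x.2.2.2.1 x.2.2.2.2⟩ :
      {x : (P ≃ Fin n) × ℕ × P //
          IsLinExt x.1 ∧ x.2.1 ≤ n ∧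
          (x.1 x.2.2 : ℕ) < x.2.1 ∧ ∀ z : P, (x.1 z : ℕ) < x.2.1 → ¬ x.2.2 < z} →
        {S : P → Finset ℕ // IsBSVLinExt n S}) ?_).symm⟩
  constructor
  · rintro ⟨x, hx⟩ ⟨y, hy⟩ h
    simp only [Subtype.mk.injEq] at h ⊢
    exact Stmt3Proof.Fmap_inj x y hx.2.2.1 hy.2.2.1 h
  · rintro ⟨S, hS⟩
    obtain ⟨x, hx, hFx⟩ := Stmt3Proof.Fmap_surj hcard S hS
    exact ⟨⟨x, hx⟩, Subtype.ext hFx⟩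
end

section
/- For any finite poset P with n elements and any m ≥ 1, there is a bijection between barely set-valued reverse P-partitions with entries in {0,...,m} and triples (π, i, p) where π is a reverse P-partition with values in {0,...,m}, i ∈ {0,1,...,m-1}, and p is a maximal element of the order ideal π⁻¹({0,1,...,i}). -/
/-- A barely set-valued reverse `P`-partition with entries in `{0,…,m}`:
every box has a nonempty set of entries contained in `{0,…,m}`, exactly one box has a
doubleton while the rest are singletons, and `max τ(p) ≤ min τ(q)` whenever `p < q`. -/
def IsBSVRPP {P : Type*} [PartialOrder P] (m : ℕ) (τ : P → Finset ℕ) : Prop :=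
  (∀ p, (τ p).Nonempty) ∧
  (∀ p, ∀ k ∈ τ p, k ≤ m) ∧
  (∃ p₀, (τ p₀).card = 2 ∧ ∀ p, p ≠ p₀ → (τ p).card = 1) ∧
  (∀ p q, p < q → ∀ a ∈ τ p, ∀ b ∈ τ q, a ≤ b)

section Aux

variable {P : Type*} [PartialOrder P] {m : ℕ} {τ : P → Finset ℕ}

noncomputable def bsvPoint (h : IsBSVRPP m τ) : P := h.2.2.1.choose

lemma bsvPoint_card (h : IsBSVRPP m τ) : (τ (bsvPoint h)).card = 2 :=
  h.2.2.1.choose_spec.1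

lemma bsvPoint_eq (h : IsBSVRPP m τ) {p : P} (hp : (τ p).card = 2) :
    p = bsvPoint h := by
  by_contra hne
  have := h.2.2.1.choose_spec.2 p hne
  omega

lemma bsv_card_eq_one (h : IsBSVRPP m τ) {p : P} (hp : p ≠ bsvPoint h) :
    (τ p).card = 1 := h.2.2.1.choose_spec.2 p hp

lemma bsv_min'_lt_max' (h : IsBSVRPP m τ) :
    (τ (bsvPoint h)).min' (h.1 _) < (τ (bsvPoint h)).max' (h.1 _) :=
  Finset.min'_lt_max'_of_card _ (by have := bsvPoint_card h; omega)

/-- The forward map is well defined. -/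
lemma bsv_forward (h : IsBSVRPP m τ) (hm : 1 ≤ m) :
    Monotone (fun p => (τ p).min' (h.1 p)) ∧
    (∀ p, (τ p).min' (h.1 p) ≤ m) ∧
    ((τ (bsvPoint h)).max' (h.1 _) - 1 < m) ∧
    ((τ (bsvPoint h)).min' (h.1 _) ≤ (τ (bsvPoint h)).max' (h.1 _) - 1) ∧
    ∀ z : P, (τ z).min' (h.1 z) ≤ (τ (bsvPoint h)).max' (h.1 _) - 1 → ¬ bsvPoint h < z := by
  have hlt := bsv_min'_lt_max' h
  refine ⟨?_, fun p => h.2.1 p _ (Finset.min'_mem _ (h.1 p)), ?_, by omega, ?_⟩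
  · intro p q hpq
    rcases eq_or_lt_of_le hpq with rfl | hpq
    · exact le_rfl
    · exact h.2.2.2 p q hpq ((τ p).min' (h.1 p)) (Finset.min'_mem _ (h.1 p))
        ((τ q).min' (h.1 q)) (Finset.min'_mem _ (h.1 q))
  · have := h.2.1 (bsvPoint h) _ (Finset.max'_mem _ (h.1 _))
    omega
  · intro z hz hzlt
    have := h.2.2.2 _ z hzlt _ (Finset.max'_mem _ (h.1 (bsvPoint h)))
      ((τ z).min' (h.1 z)) (Finset.min'_mem (τ z) (h.1 z))
    omega

open Classical in
noncomputable def tripleBsv (π : P → ℕ) (i : ℕ) (p₀ : P) : P → Finset ℕ :=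
  fun p => if p = p₀ then {π p, i + 1} else {π p}

lemma tripleBsv_apply_self (π : P → ℕ) (i : ℕ) (p₀ : P) :
    tripleBsv π i p₀ p₀ = {π p₀, i + 1} := if_pos rfl

lemma tripleBsv_apply_ne (π : P → ℕ) (i : ℕ) {p₀ p : P} (hp : p ≠ p₀) :
    tripleBsv π i p₀ p = {π p} := if_neg hp

lemma tripleBsv_card (π : P → ℕ) {i : ℕ} (p₀ : P) (h : π p₀ ≤ i) :
    (tripleBsv π i p₀ p₀).card = 2 := by
  rw [tripleBsv_apply_self, Finset.card_insert_of_notMem (by simp; omega)]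
  simp

lemma tripleBsv_is {π : P → ℕ} {i : ℕ} {p₀ : P}
    (hmono : Monotone π) (hle : ∀ p, π p ≤ m) (him : i < m)
    (hpi : π p₀ ≤ i) (hmax : ∀ z : P, π z ≤ i → ¬ p₀ < z) :
    IsBSVRPP m (tripleBsv π i p₀) := by
  refine ⟨?_, ?_, ⟨p₀, tripleBsv_card π p₀ hpi, ?_⟩, ?_⟩
  · intro p
    rcases eq_or_ne p p₀ with rfl | hp
    · rw [tripleBsv_apply_self]; simp
    · rw [tripleBsv_apply_ne _ _ hp]; simp
  · intro p k hk
    rcases eq_or_ne p p₀ with rfl | hp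
    · rw [tripleBsv_apply_self] at hk
      simp only [Finset.mem_insert, Finset.mem_singleton] at hk
      rcases hk with rfl | rfl
      · exact hle p
      · omega
    · rw [tripleBsv_apply_ne _ _ hp] at hk
      simp only [Finset.mem_singleton] at hk
      subst hk; exact hle p
  · intro p hp; rw [tripleBsv_apply_ne _ _ hp]; simp
  · intro p q hpq a ha b hb
    by_cases hp : p = p₀ <;> by_cases hq : q = p₀
    · subst hp; subst hq; exact absurd hpq (lt_irrefl _)
    · subst hp
      rw [tripleBsv_apply_self] at ha
      rw [tripleBsv_apply_ne _ _ hq] at hb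
      simp only [Finset.mem_insert, Finset.mem_singleton] at ha hb
      subst hb
      have hq' : ¬ π q ≤ i := fun hx => hmax q hx hpq
      rcases ha with rfl | rfl
      · exact hmono hpq.le
      · omega
    · subst hq
      rw [tripleBsv_apply_ne _ _ hp] at ha
      rw [tripleBsv_apply_self] at hb
      simp only [Finset.mem_insert, Finset.mem_singleton] at ha hb
      subst ha
      rcases hb with rfl | rfl
      · exact hmono hpq.le
      · exact le_trans (hmono hpq.le) (by omega)
    · rw [tripleBsv_apply_ne _ _ hp] at ha
      rw [tripleBsv_apply_ne _ _ hq] at hb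
      simp only [Finset.mem_singleton] at ha hb
      subst ha; subst hb; exact hmono hpq.le

/-- Left inverse. -/
lemma bsv_roundtrip (h : IsBSVRPP m τ) :
    tripleBsv (fun p => (τ p).min' (h.1 p)) ((τ (bsvPoint h)).max' (h.1 _) - 1)
      (bsvPoint h) = τ := by
  funext p
  by_cases hp : p = bsvPoint h
  · subst hp
    have hlt := bsv_min'_lt_max' h
    rw [tripleBsv_apply_self]
    have h1 : (τ (bsvPoint h)).max' (h.1 _) - 1 + 1 = (τ (bsvPoint h)).max' (h.1 _) := by omega
    rw [h1]
    refine Finset.eq_of_subset_of_card_le ?_ ?_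
    · intro k hk
      simp only [Finset.mem_insert, Finset.mem_singleton] at hk
      rcases hk with rfl | rfl
      · exact Finset.min'_mem _ _
      · exact Finset.max'_mem _ _
    · rw [bsvPoint_card h, Finset.card_insert_of_notMem (by simp; omega)]
      simp
  · rw [tripleBsv_apply_ne _ _ hp]
    obtain ⟨a, ha⟩ := Finset.card_eq_one.mp (bsv_card_eq_one h hp)
    simp [ha]

/-- Right inverse. -/
lemma triple_roundtrip {π : P → ℕ} {i : ℕ} {p₀ : P}
    (h : IsBSVRPP m (tripleBsv π i p₀)) (hpi : π p₀ ≤ i) :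
    ((fun p => ((tripleBsv π i p₀) p).min' (h.1 p)),
      ((tripleBsv π i p₀) (bsvPoint h)).max' (h.1 _) - 1, bsvPoint h) = (π, i, p₀) := by
  have hp₀ : p₀ = bsvPoint h := bsvPoint_eq h (tripleBsv_card π p₀ hpi)
  have hmin : ∀ p, ((tripleBsv π i p₀) p).min' (h.1 p) = π p := by
    intro p
    refine le_antisymm (Finset.min'_le _ _ ?_) (Finset.le_min' _ _ _ ?_)
    · rcases eq_or_ne p p₀ with rfl | hp
      · rw [tripleBsv_apply_self]; simp
      · rw [tripleBsv_apply_ne _ _ hp]; simp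
    · intro k hk
      rcases eq_or_ne p p₀ with rfl | hp
      · rw [tripleBsv_apply_self] at hk
        simp only [Finset.mem_insert, Finset.mem_singleton] at hk
        rcases hk with rfl | rfl
        · exact le_rfl
        · omega
      · rw [tripleBsv_apply_ne _ _ hp] at hk
        simp only [Finset.mem_singleton] at hk
        omega
  have hmax2 : ((tripleBsv π i p₀) (bsvPoint h)).max' (h.1 _) = i + 1 := by
    have E : tripleBsv π i p₀ (bsvPoint h) = {π p₀, i + 1} := by
      rw [← hp₀, tripleBsv_apply_self]
    refine le_antisymm (Finset.max'_le _ _ _ ?_) (Finset.le_max' _ _ ?_)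
    · intro k hk
      rw [E] at hk
      simp only [Finset.mem_insert, Finset.mem_singleton] at hk
      rcases hk with rfl | rfl
      · omega
      · exact le_rfl
    · rw [E]; simp
  refine Prod.ext (funext hmin) (Prod.ext ?_ hp₀.symm)
  simp only [hmax2]
  omega

end Aux

/-- for any `m ≥ 1`, barely set-valued reverse `P`-partitions with entries
in `{0,…,m}` are in bijection with triples `(π, i, p)` where `π : P → {0,…,m}` is
order-preserving, `i ∈ {0,…,m-1}`, and `p` is a maximal element of the order ideal
`π⁻¹({0,…,i})`. -/
theorem stmt_4 {P : Type*} [Fintype P] [PartialOrder P] (m : ℕ) (hm : 1 ≤ m) :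
    Nonempty
      ({τ : P → Finset ℕ // IsBSVRPP m τ} ≃
        {x : (P → ℕ) × ℕ × P //
          Monotone x.1 ∧ (∀ p, x.1 p ≤ m) ∧ x.2.1 < m ∧
          x.1 x.2.2 ≤ x.2.1 ∧ ∀ z : P, x.1 z ≤ x.2.1 → ¬ x.2.2 < z}) := by
  classical
  refine ⟨{
    toFun := fun τ =>
      ⟨((fun p => (τ.1 p).min' (τ.2.1 p)),
        (τ.1 (bsvPoint τ.2)).max' (τ.2.1 _) - 1, bsvPoint τ.2), bsv_forward τ.2 hm⟩
    invFun := fun x =>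
      ⟨tripleBsv x.1.1 x.1.2.1 x.1.2.2,
        tripleBsv_is x.2.1 x.2.2.1 x.2.2.2.1 x.2.2.2.2.1 x.2.2.2.2.2⟩
    left_inv := fun τ => Subtype.ext (bsv_roundtrip τ.2)
    right_inv := fun x => Subtype.ext (triple_roundtrip _ x.2.2.2.2.1) }⟩
end

section
/- The number of standard barely set-valued Young tableaux of rectangular shape a×b equals (ab/(a+b)) · (ab+1) times the number of standard Young tableaux of shape a×b. -/
/-- A standard Young tableau of rectangular shape `a×b`, encoded as an order-preserving
bijection from the grid poset `Fin a × Fin b` (componentwise order) to `Fin (a*b)`. -/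
def IsSYT (a b : ℕ) (T : Fin a × Fin b ≃ Fin (a * b)) : Prop :=
  ∀ p q : Fin a × Fin b, p ≤ q → T p ≤ T q

/-- A standard barely set-valued tableau of shape `a×b`: the entries are nonempty sets
partitioning `{1,…,ab+1}`, exactly one box has two numbers and all others one, and
entries strictly increase to the southeast (`max < min` along the grid order). -/
def IsBSVT (a b : ℕ) (S : Fin a × Fin b → Finset ℕ) : Prop :=
  (∀ p, (S p).Nonempty) ∧
  (∀ k, k ∈ Finset.Icc 1 (a * b + 1) ↔ ∃ p, k ∈ S p) ∧
  (∀ p q, p ≠ q → Disjoint (S p) (S q)) ∧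
  (∃ p₀, (S p₀).card = 2 ∧ ∀ p, p ≠ p₀ → (S p).card = 1) ∧
  (∀ p q, p < q → ∀ x ∈ S p, ∀ y ∈ S q, x < y)

namespace Stmt5
open Finset
open scoped Classical
noncomputable section
variable {a b : ℕ}

/-! ### slide permutations -/

def dn (c d v : ℕ) : ℕ := if v = d then c else if c ≤ v ∧ v < d then v + 1 else v
def up (c d v : ℕ) : ℕ := if v = c then d else if c < v ∧ v ≤ d then v - 1 else v

lemma up_dn {c d : ℕ} (h : c ≤ d) (v : ℕ) : up c d (dn c d v) = v := by
  simp only [dn, up]; split_ifs <;> omega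
lemma dn_up {c d : ℕ} (h : c ≤ d) (v : ℕ) : dn c d (up c d v) = v := by
  simp only [dn, up]; split_ifs <;> omega
lemma dn_lt {n c d v : ℕ} (hc : c ≤ d) (hd : d < n) (hv : v < n) : dn c d v < n := by
  simp only [dn]; split_ifs <;> omega
lemma up_lt {n c d v : ℕ} (hc : c ≤ d) (hd : d < n) (hv : v < n) : up c d v < n := by
  simp only [up]; split_ifs <;> omega
lemma dn_self (c d : ℕ) : dn c d d = c := by simp [dn]
lemma up_self (c d : ℕ) : up c d c = d := by simp [up]

def slide (n : ℕ) (c d : ℕ) (hc : c ≤ d) (hd : d < n) : Fin n ≃ Fin n where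
  toFun v := ⟨dn c d v, dn_lt hc hd v.isLt⟩
  invFun v := ⟨up c d v, up_lt hc hd v.isLt⟩
  left_inv v := by ext; exact up_dn hc v
  right_inv v := by ext; exact dn_up hc v

@[simp] lemma slide_apply {n c d : ℕ} (hc : c ≤ d) (hd : d < n) (v : Fin n) :
    ((slide n c d hc hd) v : ℕ) = dn c d v := rfl
@[simp] lemma slide_symm_apply {n c d : ℕ} (hc : c ≤ d) (hd : d < n) (v : Fin n) :
    (((slide n c d hc hd).symm) v : ℕ) = up c d v := rfl

lemma syt_strict {T : Fin a × Fin b ≃ Fin (a*b)} (hT : IsSYT a b T)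
    {p q : Fin a × Fin b} (h : p < q) : (T p : ℕ) < (T q : ℕ) := by
  have h1 : T p ≤ T q := hT p q h.le
  have h2 : T p ≠ T q := fun e => h.ne (T.injective e)
  exact Fin.lt_iff_val_lt_val.mp (lt_of_le_of_ne h1 h2)

lemma val_ne_of_ne {T : Fin a × Fin b ≃ Fin (a*b)} {u v : Fin a × Fin b} (h : u ≠ v) :
    (T u : ℕ) ≠ (T v : ℕ) := fun e => h (T.injective (Fin.val_injective e))

/-! ### addable / removable triples -/

def addC (a b : ℕ) (T : Fin a × Fin b ≃ Fin (a*b)) (p : Fin a × Fin b) (k : ℕ) : Prop :=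
  (∀ q, q < p → (T q : ℕ) < k) ∧ k ≤ (T p : ℕ)

def remC (a b : ℕ) (T : Fin a × Fin b ≃ Fin (a*b)) (p : Fin a × Fin b) (k : ℕ) : Prop :=
  (T p : ℕ) < k ∧ ∀ q, p < q → k ≤ (T q : ℕ)

def AllAdm (a b : ℕ) : Finset ((Fin a × Fin b ≃ Fin (a*b)) × (Fin a × Fin b) × ℕ) :=
  (univ ×ˢ univ ×ˢ range (a*b+1)).filter fun x => IsSYT a b x.1 ∧ addC a b x.1 x.2.1 x.2.2

def AllRem (a b : ℕ) : Finset ((Fin a × Fin b ≃ Fin (a*b)) × (Fin a × Fin b) × ℕ) :=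
  (univ ×ˢ univ ×ˢ range (a*b+1)).filter fun x => IsSYT a b x.1 ∧ remC a b x.1 x.2.1 x.2.2

lemma mem_AllAdm_iff {x : (Fin a × Fin b ≃ Fin (a*b)) × (Fin a × Fin b) × ℕ} :
    x ∈ AllAdm a b ↔ x.2.2 ≤ a*b ∧ IsSYT a b x.1 ∧ addC a b x.1 x.2.1 x.2.2 := by
  simp [AllAdm, Finset.mem_filter, Finset.mem_product, Nat.lt_succ_iff]

lemma mem_AllRem_iff {x : (Fin a × Fin b ≃ Fin (a*b)) × (Fin a × Fin b) × ℕ} :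
    x ∈ AllRem a b ↔ x.2.2 ≤ a*b ∧ IsSYT a b x.1 ∧ remC a b x.1 x.2.1 x.2.2 := by
  simp [AllRem, Finset.mem_filter, Finset.mem_product, Nat.lt_succ_iff]

/-! ### the toggle-symmetry bijection -/

def fwd (x : (Fin a × Fin b ≃ Fin (a*b)) × (Fin a × Fin b) × ℕ) (hx : x ∈ AllAdm a b) :
    (Fin a × Fin b ≃ Fin (a*b)) × (Fin a × Fin b) × ℕ :=
  (x.1.trans (slide (a*b) x.2.2 (x.1 x.2.1) (mem_AllAdm_iff.mp hx).2.2.2 (x.1 x.2.1).isLt),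
    x.2.1, (x.1 x.2.1 : ℕ) + 1)

def bwd (x : (Fin a × Fin b ≃ Fin (a*b)) × (Fin a × Fin b) × ℕ) (hx : x ∈ AllRem a b) :
    (Fin a × Fin b ≃ Fin (a*b)) × (Fin a × Fin b) × ℕ :=
  (x.1.trans (slide (a*b) (x.1 x.2.1 : ℕ) (x.2.2 - 1)
      (by have := (mem_AllRem_iff.mp hx).2.2.1; omega)
      (by have h1 := (mem_AllRem_iff.mp hx).1; have h2 := (x.1 x.2.1).isLt
          have h3 := (mem_AllRem_iff.mp hx).2.2.1; omega)).symm,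
    x.2.1, (x.1 x.2.1 : ℕ))

lemma fwd_mem (x : (Fin a × Fin b ≃ Fin (a*b)) × (Fin a × Fin b) × ℕ) (hx : x ∈ AllAdm a b) :
    fwd x hx ∈ AllRem a b := by
  obtain ⟨hk, hT, hadd⟩ := mem_AllAdm_iff.mp hx
  rw [mem_AllRem_iff]
  refine ⟨(x.1 x.2.1).isLt, ?_, ?_, ?_⟩
  · -- IsSYT
    intro u v huv
    rcases eq_or_ne u v with rfl | hne
    · exact le_refl _
    have hlt : (x.1 u : ℕ) < (x.1 v : ℕ) := syt_strict hT (lt_of_le_of_ne huv hne)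
    rw [Fin.le_def]
    simp only [fwd, Equiv.trans_apply, slide_apply]
    rcases eq_or_ne u x.2.1 with rfl | hup
    · have hvp : (x.1 v : ℕ) ≠ (x.1 x.2.1 : ℕ) := val_ne_of_ne hne.symm
      have h2 := hadd.2
      simp only [dn]; split_ifs <;> omega
    · rcases eq_or_ne v x.2.1 with rfl | hvp
      · have h1 : (x.1 u : ℕ) ≠ (x.1 x.2.1 : ℕ) := val_ne_of_ne hne
        have h2 : (x.1 u : ℕ) < x.2.2 := hadd.1 u (lt_of_le_of_ne huv hne)
        simp only [dn]; split_ifs <;> omega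
      · have h1 : (x.1 u : ℕ) ≠ (x.1 x.2.1 : ℕ) := val_ne_of_ne hup
        have h2 : (x.1 v : ℕ) ≠ (x.1 x.2.1 : ℕ) := val_ne_of_ne hvp
        simp only [dn]; split_ifs <;> omega
  · -- first part of remC
    simp only [fwd, Equiv.trans_apply, slide_apply, dn_self]
    exact Nat.lt_succ_of_le hadd.2
  · -- second part of remC
    intro q hq
    have hlt : (x.1 x.2.1 : ℕ) < (x.1 q : ℕ) := syt_strict hT hq
    have h1 : (x.1 q : ℕ) ≠ (x.1 x.2.1 : ℕ) := val_ne_of_ne hq.ne'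
    have h2 := hadd.2
    simp only [fwd, Equiv.trans_apply, slide_apply]
    simp only [dn]; split_ifs <;> omega

lemma bwd_mem (x : (Fin a × Fin b ≃ Fin (a*b)) × (Fin a × Fin b) × ℕ) (hx : x ∈ AllRem a b) :
    bwd x hx ∈ AllAdm a b := by
  obtain ⟨hk, hT, hrem⟩ := mem_AllRem_iff.mp hx
  rw [mem_AllAdm_iff]
  refine ⟨le_of_lt (lt_of_lt_of_le ((x.1 x.2.1).isLt) (Nat.le_refl _)) |>.trans (le_refl _), ?_, ?_, ?_⟩
  · -- IsSYT
    intro u v huv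
    rcases eq_or_ne u v with rfl | hne
    · exact le_refl _
    have hlt : (x.1 u : ℕ) < (x.1 v : ℕ) := syt_strict hT (lt_of_le_of_ne huv hne)
    rw [Fin.le_def]
    simp only [bwd, Equiv.trans_apply, slide_symm_apply]
    rcases eq_or_ne u x.2.1 with rfl | hup
    · have hvp : (x.1 v : ℕ) ≠ (x.1 x.2.1 : ℕ) := val_ne_of_ne hne.symm
      have h2 : x.2.2 ≤ (x.1 v : ℕ) := hrem.2 v (lt_of_le_of_ne huv hne)
      have h3 := hrem.1
      simp only [up]; split_ifs <;> omega
    · rcases eq_or_ne v x.2.1 with rfl | hvp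
      · have h1 : (x.1 u : ℕ) ≠ (x.1 x.2.1 : ℕ) := val_ne_of_ne hne
        have h3 := hrem.1
        simp only [up]; split_ifs <;> omega
      · have h1 : (x.1 u : ℕ) ≠ (x.1 x.2.1 : ℕ) := val_ne_of_ne hup
        have h2 : (x.1 v : ℕ) ≠ (x.1 x.2.1 : ℕ) := val_ne_of_ne hvp
        simp only [up]; split_ifs <;> omega
  · -- first part of addC
    intro q hq
    have hlt : (x.1 q : ℕ) < (x.1 x.2.1 : ℕ) := syt_strict hT hq
    have h1 : (x.1 q : ℕ) ≠ (x.1 x.2.1 : ℕ) := val_ne_of_ne hq.ne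
    simp only [bwd, Equiv.trans_apply, slide_symm_apply]
    simp only [up]; split_ifs <;> omega
  · -- second part of addC
    have h3 := hrem.1
    simp only [bwd, Equiv.trans_apply, slide_symm_apply, up_self]
    omega

lemma bwd_fwd (x : (Fin a × Fin b ≃ Fin (a*b)) × (Fin a × Fin b) × ℕ) (hx : x ∈ AllAdm a b) :
    bwd (fwd x hx) (fwd_mem x hx) = x := by
  obtain ⟨hk, hT, hadd⟩ := mem_AllAdm_iff.mp hx
  have hc := hadd.2
  refine Prod.ext ?_ (Prod.ext rfl ?_)
  · apply Equiv.ext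
    intro q
    apply Fin.val_injective
    simp only [bwd, fwd, Equiv.trans_apply, slide_symm_apply, slide_apply, dn_self,
      Nat.add_sub_cancel]
    exact up_dn hc _
  · simp only [bwd, fwd, Equiv.trans_apply, slide_apply, dn_self]

lemma fwd_bwd (x : (Fin a × Fin b ≃ Fin (a*b)) × (Fin a × Fin b) × ℕ) (hx : x ∈ AllRem a b) :
    fwd (bwd x hx) (bwd_mem x hx) = x := by
  obtain ⟨hk, hT, hrem⟩ := mem_AllRem_iff.mp hx
  have hc : (x.1 x.2.1 : ℕ) ≤ x.2.2 - 1 := by have := hrem.1; omega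
  refine Prod.ext ?_ (Prod.ext rfl ?_)
  · apply Equiv.ext
    intro q
    apply Fin.val_injective
    simp only [fwd, bwd, Equiv.trans_apply, slide_apply, slide_symm_apply, up_self]
    exact dn_up hc _
  · simp only [fwd, bwd, Equiv.trans_apply, slide_symm_apply, up_self]
    have := hrem.1; omega

lemma sum_AllAdm_eq_sum_AllRem (f : Fin a × Fin b → ℚ) :
    ∑ x ∈ AllAdm a b, f x.2.1 = ∑ x ∈ AllRem a b, f x.2.1 :=
  Finset.sum_bij' fwd bwd fwd_mem bwd_mem bwd_fwd fwd_bwd (fun x hx => rfl)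

/-- generic: a down-closed subset of `Fin m` is a prefix -/
lemma mem_iff_lt_card {m : ℕ} (s : Finset (Fin m))
    (hdc : ∀ x ∈ s, ∀ y, y ≤ x → y ∈ s) (j : Fin m) : j ∈ s ↔ (j : ℕ) < s.card := by
  constructor
  · intro hj
    have hsub : Finset.Iic j ⊆ s := fun y hy => hdc j hj y (Finset.mem_Iic.mp hy)
    have := Finset.card_le_card hsub
    rw [Fin.card_Iic] at this; omega
  · intro hj
    by_contra hns
    have hsub : s ⊆ Finset.Iio j := by
      intro x hxs
      rw [Finset.mem_Iio]
      by_contra hxj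
      exact hns (hdc x hxs j (le_of_not_gt hxj))
    have := Finset.card_le_card hsub
    rw [Fin.card_Iio] at this; omega

def rowlen (a b : ℕ) (T : Fin a × Fin b ≃ Fin (a*b)) (k i : ℕ) : ℕ :=
  if h : i < a then (univ.filter fun j : Fin b => (T (⟨i, h⟩, j) : ℕ) < k).card else 0

def RR (a b : ℕ) (T : Fin a × Fin b ≃ Fin (a*b)) (k i : ℕ) : ℕ :=
  if i = 0 then b else rowlen a b T k (i - 1)

lemma RR_succ (T : Fin a × Fin b ≃ Fin (a*b)) (k i : ℕ) :
    RR a b T k (i+1) = rowlen a b T k i := by simp [RR]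

lemma rowlen_le (T : Fin a × Fin b ≃ Fin (a*b)) (k i : ℕ) : rowlen a b T k i ≤ b := by
  unfold rowlen; split
  · exact le_trans (Finset.card_filter_le _ _) (by simp)
  · exact Nat.zero_le b

lemma rowlen_a (T : Fin a × Fin b ≃ Fin (a*b)) (k : ℕ) : rowlen a b T k a = 0 := by
  simp [rowlen]

lemma rowlen_mem {T : Fin a × Fin b ≃ Fin (a*b)} (hT : IsSYT a b T) (k : ℕ)
    (i : Fin a) (j : Fin b) : (T (i, j) : ℕ) < k ↔ (j : ℕ) < rowlen a b T k (i : ℕ) := by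
  rw [rowlen, dif_pos i.isLt]
  have he : (⟨(i : ℕ), i.isLt⟩ : Fin a) = i := by ext; rfl
  rw [he]
  have hdc : ∀ x ∈ (univ.filter fun j : Fin b => (T (i, j) : ℕ) < k),
      ∀ y, y ≤ x → y ∈ (univ.filter fun j : Fin b => (T (i, j) : ℕ) < k) := by
    intro x hx y hy
    simp only [Finset.mem_filter, Finset.mem_univ, true_and] at hx ⊢
    have : T (i, y) ≤ T (i, x) := hT _ _ ⟨le_refl i, hy⟩
    exact lt_of_le_of_lt (Fin.le_def.mp this) hx
  constructor
  · intro h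
    exact (mem_iff_lt_card _ hdc j).mp (by simp [h])
  · intro h
    have := (mem_iff_lt_card _ hdc j).mpr h
    simpa using this

lemma rowlen_anti {T : Fin a × Fin b ≃ Fin (a*b)} (hT : IsSYT a b T) (k : ℕ)
    {i i' : ℕ} (h : i ≤ i') : rowlen a b T k i' ≤ rowlen a b T k i := by
  refine antitone_nat_of_succ_le (fun m => ?_) h
  unfold rowlen
  by_cases h1 : m + 1 < a
  · rw [dif_pos h1, dif_pos (by omega : m < a)]
    apply Finset.card_le_card
    intro j hj
    simp only [Finset.mem_filter, Finset.mem_univ, true_and] at hj ⊢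
    have : T (⟨m, by omega⟩, j) ≤ T (⟨m+1, h1⟩, j) :=
      hT _ _ ⟨by simp [Fin.le_def], le_refl j⟩
    exact lt_of_le_of_lt (Fin.le_def.mp this) hj
  · rw [dif_neg h1]; exact Nat.zero_le _

lemma RR_anti {T : Fin a × Fin b ≃ Fin (a*b)} (hT : IsSYT a b T) (k : ℕ) (i : ℕ) :
    RR a b T k (i+1) ≤ RR a b T k i := by
  rcases Nat.eq_zero_or_pos i with rfl | hi
  · rw [RR_succ]; simp [RR]; exact rowlen_le T k 0
  · rw [RR_succ]
    have : RR a b T k i = rowlen a b T k (i-1) := by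
      rw [RR, if_neg (by omega)]
    rw [this]
    exact rowlen_anti hT k (by omega)

lemma RR_le (T : Fin a × Fin b ≃ Fin (a*b)) (k i : ℕ) : RR a b T k i ≤ b := by
  rw [RR]; split
  · exact le_refl b
  · exact rowlen_le T k _


lemma addC_iff {T : Fin a × Fin b ≃ Fin (a*b)} (hT : IsSYT a b T) (k : ℕ)
    (p : Fin a × Fin b) :
    addC a b T p k ↔
      ((p.2 : ℕ) = RR a b T k ((p.1 : ℕ)+1) ∧
        RR a b T k ((p.1 : ℕ)+1) < RR a b T k (p.1 : ℕ)) := by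
  rw [RR_succ]
  constructor
  · rintro ⟨h1, h2⟩
    have hp : p = (p.1, p.2) := rfl
    have hnotmem : ¬ ((p.2 : ℕ) < rowlen a b T k (p.1 : ℕ)) := by
      rw [← rowlen_mem hT k p.1 p.2, ← hp]; omega
    have hle2 : (p.2 : ℕ) ≤ rowlen a b T k (p.1 : ℕ) := by
      rcases Nat.eq_zero_or_pos (p.2 : ℕ) with h0 | hpos
      · omega
      · have hq : ((p.1, (⟨(p.2 : ℕ) - 1, by omega⟩ : Fin b)) : Fin a × Fin b) < p := by
          exact Prod.lt_iff.mpr (Or.inr ⟨le_refl _, by rw [Fin.lt_def]; simp; omega⟩)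
        have := h1 _ hq
        rw [rowlen_mem hT k] at this
        simp at this
        omega
    have heq : (p.2 : ℕ) = rowlen a b T k (p.1 : ℕ) := by omega
    refine ⟨heq, ?_⟩
    rcases Nat.eq_zero_or_pos (p.1 : ℕ) with h0 | hpos
    · rw [RR, if_pos h0]; omega
    · rw [RR, if_neg (by omega)]
      have hq : (((⟨(p.1 : ℕ) - 1, by omega⟩ : Fin a), p.2) : Fin a × Fin b) < p := by
        exact Prod.lt_iff.mpr (Or.inl ⟨by rw [Fin.lt_def]; simp; omega, le_refl _⟩)
      have := h1 _ hq
      rw [rowlen_mem hT k] at this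
      simp at this
      omega
  · rintro ⟨heq, hlt⟩
    constructor
    · intro q hq
      rcases Prod.lt_iff.mp hq with ⟨h11, h12⟩ | ⟨h11, h12⟩
      · -- q.1 < p.1
        have hq1 : ((q.1 : ℕ)) ≤ (p.1 : ℕ) - 1 := by
          have := Fin.lt_def.mp h11; omega
        have hp1 : (0:ℕ) < (p.1 : ℕ) := by have := Fin.lt_def.mp h11; omega
        have hRR : RR a b T k (p.1 : ℕ) = rowlen a b T k ((p.1 : ℕ) - 1) := by
          rw [RR, if_neg (by omega)]
        have hanti : rowlen a b T k ((p.1 : ℕ) - 1) ≤ rowlen a b T k (q.1 : ℕ) :=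
          rowlen_anti hT k hq1
        have hq2 : (q.2 : ℕ) ≤ (p.2 : ℕ) := Fin.le_def.mp h12
        have : (T (q.1, q.2) : ℕ) < k := by
          rw [rowlen_mem hT k]; omega
        simpa using this
      · -- q.1 ≤ p.1, q.2 < p.2
        rcases eq_or_lt_of_le h11 with he | hlt1
        · have : (T (q.1, q.2) : ℕ) < k := by
            rw [rowlen_mem hT k]
            have := Fin.lt_def.mp h12
            rw [he]
            omega
          simpa using this
        · have hq1 : ((q.1 : ℕ)) ≤ (p.1 : ℕ) - 1 := by
            have := Fin.lt_def.mp hlt1; omega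
          have hp1 : (0:ℕ) < (p.1 : ℕ) := by have := Fin.lt_def.mp hlt1; omega
          have hRR : RR a b T k (p.1 : ℕ) = rowlen a b T k ((p.1 : ℕ) - 1) := by
            rw [RR, if_neg (by omega)]
          have hanti : rowlen a b T k ((p.1 : ℕ) - 1) ≤ rowlen a b T k (q.1 : ℕ) :=
            rowlen_anti hT k hq1
          have hq2 : (q.2 : ℕ) ≤ (p.2 : ℕ) := le_of_lt (Fin.lt_def.mp h12)
          have : (T (q.1, q.2) : ℕ) < k := by
            rw [rowlen_mem hT k]; omega
          simpa using this
    · have : ¬ ((p.2 : ℕ) < rowlen a b T k (p.1 : ℕ)) := by omega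
      rw [← rowlen_mem hT k p.1 p.2] at this
      simpa using not_lt.mp this

lemma remC_iff {T : Fin a × Fin b ≃ Fin (a*b)} (hT : IsSYT a b T) (k : ℕ)
    (p : Fin a × Fin b) :
    remC a b T p k ↔
      ((p.2 : ℕ) + 1 = RR a b T k ((p.1 : ℕ)+1) ∧
        RR a b T k ((p.1 : ℕ)+2) < RR a b T k ((p.1 : ℕ)+1)) := by
  have hrs2 : RR a b T k ((p.1 : ℕ)+2) = rowlen a b T k ((p.1 : ℕ)+1) := by
    rw [show (p.1:ℕ)+2 = ((p.1:ℕ)+1)+1 by ring, RR_succ]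
  rw [RR_succ, hrs2]
  constructor
  · rintro ⟨h1, h2⟩
    have hp : p = (p.1, p.2) := rfl
    have hmem : ((p.2 : ℕ)) < rowlen a b T k (p.1 : ℕ) := by
      rw [← rowlen_mem hT k p.1 p.2, ← hp]; exact h1
    have hle : rowlen a b T k (p.1 : ℕ) ≤ (p.2 : ℕ) + 1 := by
      by_cases hb2 : (p.2 : ℕ) + 1 < b
      · have hq : p < ((p.1, (⟨(p.2 : ℕ) + 1, hb2⟩ : Fin b)) : Fin a × Fin b) := by
          exact Prod.lt_iff.mpr (Or.inr ⟨le_refl _, by rw [Fin.lt_def]; simp⟩)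
        have := h2 _ hq
        have hnm : ¬ ((T (p.1, (⟨(p.2 : ℕ) + 1, hb2⟩ : Fin b)) : ℕ) < k) := by omega
        rw [rowlen_mem hT k] at hnm
        simp at hnm
        omega
      · have := rowlen_le T k (p.1 : ℕ); omega
    refine ⟨by omega, ?_⟩
    have hlt1 : rowlen a b T k ((p.1:ℕ)+1) ≤ (p.2 : ℕ) := by
      by_cases ha2 : (p.1 : ℕ) + 1 < a
      · have hq : p < (((⟨(p.1 : ℕ) + 1, ha2⟩ : Fin a), p.2) : Fin a × Fin b) := by
          exact Prod.lt_iff.mpr (Or.inl ⟨by rw [Fin.lt_def]; simp, le_refl _⟩)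
        have := h2 _ hq
        have hnm : ¬ ((T ((⟨(p.1 : ℕ) + 1, ha2⟩ : Fin a), p.2) : ℕ) < k) := by omega
        rw [rowlen_mem hT k] at hnm
        simp at hnm
        omega
      · have : rowlen a b T k ((p.1:ℕ)+1) = 0 := by
          rw [rowlen, dif_neg (by omega)]
        omega
    omega
  · rintro ⟨heq, hlt⟩
    constructor
    · have : (p.2 : ℕ) < rowlen a b T k (p.1 : ℕ) := by omega
      rw [← rowlen_mem hT k p.1 p.2] at this
      exact this
    · intro q hq
      rcases Prod.lt_iff.mp hq with ⟨h11, h12⟩ | ⟨h11, h12⟩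
      · -- p.1 < q.1
        have hq1 : ((p.1 : ℕ)) + 1 ≤ (q.1 : ℕ) := Fin.lt_def.mp h11
        have hanti : rowlen a b T k (q.1 : ℕ) ≤ rowlen a b T k ((p.1 : ℕ) + 1) :=
          rowlen_anti hT k hq1
        have hq2 : (p.2 : ℕ) ≤ (q.2 : ℕ) := Fin.le_def.mp h12
        have hnm : ¬ ((T (q.1, q.2) : ℕ) < k) := by
          rw [rowlen_mem hT k]; omega
        simp at hnm
        omega
      · rcases eq_or_lt_of_le h11 with he | hlt1
        · have hq2 : (p.2 : ℕ) + 1 ≤ (q.2 : ℕ) := Fin.lt_def.mp h12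
          have hnm : ¬ ((T (q.1, q.2) : ℕ) < k) := by
            rw [rowlen_mem hT k, ← he]; omega
          simp at hnm
          omega
        · have hq1 : ((p.1 : ℕ)) + 1 ≤ (q.1 : ℕ) := Fin.lt_def.mp hlt1
          have hanti : rowlen a b T k (q.1 : ℕ) ≤ rowlen a b T k ((p.1 : ℕ) + 1) :=
            rowlen_anti hT k hq1
          have hq2 : (p.2 : ℕ) ≤ (q.2 : ℕ) := le_of_lt (Fin.lt_def.mp h12)
          have hnm : ¬ ((T (q.1, q.2) : ℕ) < k) := by
            rw [rowlen_mem hT k]; omega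
          simp at hnm
          omega


def wA (a b : ℕ) (p : Fin a × Fin b) : ℚ := (a*b : ℚ) - b*((p.1 : ℕ) : ℚ) - a*((p.2 : ℕ) : ℚ)
def wR (a b : ℕ) (p : Fin a × Fin b) : ℚ :=
  (a*b : ℚ) - a - b - b*((p.1 : ℕ) : ℚ) - a*((p.2 : ℕ) : ℚ)

lemma key_identity {T : Fin a × Fin b ≃ Fin (a*b)} (hT : IsSYT a b T) (k : ℕ) :
    ∑ p ∈ univ.filter (fun p => addC a b T p k), wA a b p
      - ∑ p ∈ univ.filter (fun p => remC a b T p k), wR a b p = (a*b : ℚ) := by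
  have hRle : ∀ i, RR a b T k i ≤ b := fun i => RR_le T k i
  have hRanti : ∀ i, RR a b T k (i+1) ≤ RR a b T k i := fun i => RR_anti hT k i
  have hR0 : RR a b T k 0 = b := by simp [RR]
  have hRa1 : RR a b T k (a+1) = 0 := by rw [RR_succ]; exact rowlen_a T k
  -- step 1: the addable sum
  have hadd : ∑ p ∈ univ.filter (fun p => addC a b T p k), wA a b p
      = ∑ i ∈ range a, (if RR a b T k (i+1) < RR a b T k i then ((a*b : ℚ) - b*(i:ℚ) - a*((RR a b T k (i+1) : ℕ) : ℚ)) else 0) := by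
    rw [Finset.sum_filter, ← Fin.sum_univ_eq_sum_range
      (fun i => (if RR a b T k (i+1) < RR a b T k i then ((a*b : ℚ) - b*(i:ℚ) - a*((RR a b T k (i+1) : ℕ) : ℚ)) else 0)) a]
    rw [Fintype.sum_prod_type]
    apply Finset.sum_congr rfl
    intro i _
    by_cases hcond : RR a b T k ((i:ℕ)+1) < RR a b T k (i:ℕ)
    · have hlt : RR a b T k ((i:ℕ)+1) < b := lt_of_lt_of_le hcond (hRle _)
      rw [if_pos hcond]
      rw [Finset.sum_eq_single (⟨RR a b T k ((i:ℕ)+1), hlt⟩ : Fin b)]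
      · rw [if_pos]
        · simp [wA]
        · rw [addC_iff hT k]
          exact ⟨rfl, hcond⟩
      · intro j _ hj
        rw [if_neg]
        rw [addC_iff hT k]
        rintro ⟨h1, -⟩
        exact hj (by ext; exact h1)
      · intro h; exact absurd (Finset.mem_univ _) h
    · rw [if_neg hcond]
      apply Finset.sum_eq_zero
      intro j _
      rw [if_neg]
      rw [addC_iff hT k]
      rintro ⟨-, h2⟩
      exact hcond h2
  -- step 1': the removable sum
  have hrem : ∑ p ∈ univ.filter (fun p => remC a b T p k), wR a b p
      = ∑ i ∈ range a, (if RR a b T k (i+2) < RR a b T k (i+1) then ((a*b : ℚ) - b*((i:ℚ)+1) - a*((RR a b T k (i+1) : ℕ) : ℚ)) else 0) := by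
    rw [Finset.sum_filter, ← Fin.sum_univ_eq_sum_range
      (fun i => (if RR a b T k (i+2) < RR a b T k (i+1) then ((a*b : ℚ) - b*((i:ℚ)+1) - a*((RR a b T k (i+1) : ℕ) : ℚ)) else 0)) a]
    rw [Fintype.sum_prod_type]
    apply Finset.sum_congr rfl
    intro i _
    by_cases hcond : RR a b T k ((i:ℕ)+2) < RR a b T k ((i:ℕ)+1)
    · have h1 : 1 ≤ RR a b T k ((i:ℕ)+1) := by omega
      have hlt : RR a b T k ((i:ℕ)+1) - 1 < b := by have := hRle ((i:ℕ)+1); omega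
      rw [if_pos hcond]
      rw [Finset.sum_eq_single (⟨RR a b T k ((i:ℕ)+1) - 1, hlt⟩ : Fin b)]
      · rw [if_pos]
        · simp only [wR]
          have : ((RR a b T k ((i:ℕ)+1) - 1 : ℕ) : ℚ) = ((RR a b T k ((i:ℕ)+1) : ℕ) : ℚ) - 1 := by
            push_cast [Nat.cast_sub h1]; ring
          simp only [this]
          push_cast
          ring
        · rw [remC_iff hT k]
          constructor
          · simp; omega
          · exact hcond
      · intro j _ hj
        rw [if_neg]
        rw [remC_iff hT k]
        rintro ⟨h1', -⟩
        apply hj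
        ext
        simp at h1' ⊢
        omega
      · intro h; exact absurd (Finset.mem_univ _) h
    · rw [if_neg hcond]
      apply Finset.sum_eq_zero
      intro j _
      rw [if_neg]
      rw [remC_iff hT k]
      rintro ⟨-, h2⟩
      exact hcond h2
  rw [hadd, hrem, ← Finset.sum_sub_distrib]
  -- step 2: telescoping
  set H : ℕ → ℚ := fun i => (a*b : ℚ) - b*(i:ℚ) - a*((RR a b T k i : ℕ) : ℚ) with hH
  set u : ℕ → ℚ := fun i => (if RR a b T k (i+1) < RR a b T k i then H i else 0) + a*((RR a b T k i : ℕ) : ℚ) with hu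
  have key : ∀ i, (if RR a b T k (i+1) < RR a b T k i then ((a*b : ℚ) - b*(i:ℚ) - a*((RR a b T k (i+1) : ℕ) : ℚ)) else 0)
      - (if RR a b T k (i+2) < RR a b T k (i+1) then ((a*b : ℚ) - b*((i:ℚ)+1) - a*((RR a b T k (i+1) : ℕ) : ℚ)) else 0)
      = u i - u (i+1) := by
    intro i
    have h1 := hRanti i
    simp only [hu, hH, show i+1+1 = i+2 from rfl]
    by_cases c1 : RR a b T k (i+1) < RR a b T k i <;>
      by_cases c2 : RR a b T k (i+2) < RR a b T k (i+1)
    · rw [if_pos c1, if_pos c1, if_pos c2, if_pos c2]; push_cast; ring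
    · rw [if_pos c1, if_pos c1, if_neg c2, if_neg c2]; push_cast; ring
    · have heq : RR a b T k (i+1) = RR a b T k i := by omega
      rw [if_neg c1, if_neg c1, if_pos c2, if_pos c2, heq]; push_cast; ring
    · have heq : RR a b T k (i+1) = RR a b T k i := by omega
      rw [if_neg c1, if_neg c1, if_neg c2, if_neg c2, heq]; push_cast; ring
  rw [Finset.sum_congr rfl (fun i _ => key i), Finset.sum_range_sub' u a]
  have hH0 : H 0 = 0 := by
    simp only [hH, hR0]; push_cast; ring
  have hu0 : u 0 = (a*b : ℚ) := by
    simp only [hu, hH0, ite_self, hR0]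
    push_cast; ring
  have hua : u a = 0 := by
    simp only [hu, hRa1]
    by_cases ca : 0 < RR a b T k a
    · rw [if_pos ca]
      simp only [hH, hRa1]
      push_cast; ring
    · have h0 : RR a b T k a = 0 := by omega
      simp [h0]
  rw [hu0, hua]
  ring


/-! ### from triples to barely set-valued tableaux -/

def vmap (a b : ℕ) (T : Fin a × Fin b ≃ Fin (a*b)) (k : ℕ) (q : Fin a × Fin b) : ℕ :=
  if (T q : ℕ) < k then (T q : ℕ) + 1 else (T q : ℕ) + 2

def toBSVT (a b : ℕ) (x : (Fin a × Fin b ≃ Fin (a*b)) × (Fin a × Fin b) × ℕ) :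
    Fin a × Fin b → Finset ℕ :=
  fun q => if q = x.2.1 then {vmap a b x.1 x.2.2 q, x.2.2 + 1} else {vmap a b x.1 x.2.2 q}

lemma mem_toBSVT {T : Fin a × Fin b ≃ Fin (a*b)} {p0 : Fin a × Fin b} {k : ℕ}
    {m : ℕ} {q : Fin a × Fin b} :
    m ∈ toBSVT a b (T, p0, k) q ↔ (m = vmap a b T k q ∨ (q = p0 ∧ m = k + 1)) := by
  unfold toBSVT
  dsimp only
  split_ifs with h
  · simp [Finset.mem_insert, h]
  · simp [h]

lemma vmap_bounds (T : Fin a × Fin b ≃ Fin (a*b)) (k : ℕ) (q : Fin a × Fin b) :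
    1 ≤ vmap a b T k q ∧ vmap a b T k q ≤ a*b + 1 := by
  have := (T q).isLt
  unfold vmap; split_ifs <;> omega

lemma vmap_ne (T : Fin a × Fin b ≃ Fin (a*b)) (k : ℕ) (q : Fin a × Fin b) :
    vmap a b T k q ≠ k + 1 := by
  unfold vmap; split_ifs <;> omega

lemma vmap_inj {T : Fin a × Fin b ≃ Fin (a*b)} {k : ℕ} {q q' : Fin a × Fin b}
    (h : vmap a b T k q = vmap a b T k q') : q = q' := by
  have hval : (T q : ℕ) = (T q' : ℕ) := by
    unfold vmap at h; split_ifs at h <;> omega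
  exact T.injective (Fin.val_injective hval)

lemma vmap_strict {T : Fin a × Fin b ≃ Fin (a*b)} {k : ℕ} {q q' : Fin a × Fin b}
    (h : (T q : ℕ) < (T q' : ℕ)) : vmap a b T k q < vmap a b T k q' := by
  unfold vmap; split_ifs <;> omega

lemma toBSVT_isBSVT (x : (Fin a × Fin b ≃ Fin (a*b)) × (Fin a × Fin b) × ℕ)
    (hx : x ∈ AllRem a b) : IsBSVT a b (toBSVT a b x) := by
  obtain ⟨hk, hT, hrem⟩ := mem_AllRem_iff.mp hx
  obtain ⟨T, p0, k⟩ := x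
  simp only at hk hrem ⊢
  refine ⟨?_, ?_, ?_, ?_, ?_⟩
  · -- nonempty
    intro p
    unfold toBSVT
    split_ifs
    · exact Finset.insert_nonempty _ _
    · exact Finset.singleton_nonempty _
  · -- cover
    intro m
    constructor
    · intro hm
      rw [Finset.mem_Icc] at hm
      rcases eq_or_ne m (k+1) with rfl | hne
      · exact ⟨p0, mem_toBSVT.mpr (Or.inr ⟨rfl, rfl⟩)⟩
      · by_cases hmk : m ≤ k
        · refine ⟨T.symm ⟨m - 1, by omega⟩, mem_toBSVT.mpr (Or.inl ?_)⟩
          unfold vmap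
          rw [Equiv.apply_symm_apply]
          show m = if m - 1 < k then m - 1 + 1 else m - 1 + 2
          split_ifs <;> omega
        · refine ⟨T.symm ⟨m - 2, by omega⟩, mem_toBSVT.mpr (Or.inl ?_)⟩
          unfold vmap
          rw [Equiv.apply_symm_apply]
          show m = if m - 2 < k then m - 2 + 1 else m - 2 + 2
          split_ifs <;> omega
    · rintro ⟨p, hp⟩
      rcases mem_toBSVT.mp hp with h | ⟨-, h⟩
      · have := vmap_bounds T k p
        rw [Finset.mem_Icc]; omega
      · rw [Finset.mem_Icc]; omega
  · -- disjoint
    intro p q hpq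
    rw [Finset.disjoint_left]
    intro m hmp hmq
    rcases mem_toBSVT.mp hmp with h1 | ⟨e1, h1⟩ <;>
      rcases mem_toBSVT.mp hmq with h2 | ⟨e2, h2⟩
    · exact hpq (vmap_inj (h1.symm.trans h2))
    · exact vmap_ne T k p (by omega)
    · exact vmap_ne T k q (by omega)
    · exact hpq (e1.trans e2.symm)
  · -- unique double box
    refine ⟨p0, ?_, ?_⟩
    · unfold toBSVT
      rw [if_pos rfl]
      rw [Finset.card_insert_of_notMem (by simp; exact vmap_ne T k p0), Finset.card_singleton]
    · intro p hp
      unfold toBSVT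
      rw [if_neg hp, Finset.card_singleton]
  · -- strictly increasing
    intro p q hpq m hm m' hm'
    have hst : (T p : ℕ) < (T q : ℕ) := syt_strict hT hpq
    rcases mem_toBSVT.mp hm with h1 | ⟨e1, h1⟩ <;>
      rcases mem_toBSVT.mp hm' with h2 | ⟨e2, h2⟩
    · rw [h1, h2]; exact vmap_strict hst
    · -- m = vmap p, q = p0, m' = k+1 : p < p0 so T p < T p0 < k
      subst e2
      have h3 : (T p : ℕ) < k := lt_trans hst hrem.1
      rw [h1, h2]
      unfold vmap
      rw [if_pos h3]
      omega
    · -- p = p0, m = k+1, m' = vmap q : q > p0 so T q ≥ k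
      subst e1
      have h3 : k ≤ (T q : ℕ) := hrem.2 q hpq
      rw [h1, h2]
      unfold vmap
      rw [if_neg (by omega)]
      omega
    · rw [e1, e2] at hpq; exact absurd hpq (lt_irrefl _)


lemma toBSVT_card_two {T : Fin a × Fin b ≃ Fin (a*b)} {p0 : Fin a × Fin b} {k : ℕ} :
    (toBSVT a b (T, p0, k) p0).card = 2 := by
  unfold toBSVT
  dsimp only
  rw [if_pos rfl, Finset.card_insert_of_notMem
    (Finset.notMem_singleton.mpr (vmap_ne T k p0)), Finset.card_singleton]

lemma toBSVT_card_one {T : Fin a × Fin b ≃ Fin (a*b)} {p0 q : Fin a × Fin b} {k : ℕ}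
    (h : q ≠ p0) : (toBSVT a b (T, p0, k) q).card = 1 := by
  unfold toBSVT
  dsimp only
  rw [if_neg h, Finset.card_singleton]

lemma toBSVT_le {T : Fin a × Fin b ≃ Fin (a*b)} {p0 : Fin a × Fin b} {k : ℕ}
    (hrem : remC a b T p0 k) {m : ℕ} (hm : m ∈ toBSVT a b (T, p0, k) p0) : m ≤ k + 1 := by
  rcases mem_toBSVT.mp hm with h | ⟨-, h⟩
  · have h2 := hrem.1
    rw [h]; unfold vmap; rw [if_pos h2]; omega
  · omega

lemma toBSVT_inj {x y : (Fin a × Fin b ≃ Fin (a*b)) × (Fin a × Fin b) × ℕ}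
    (hx : x ∈ AllRem a b) (hy : y ∈ AllRem a b)
    (h : toBSVT a b x = toBSVT a b y) : x = y := by
  obtain ⟨hkx, hTx, hremx⟩ := mem_AllRem_iff.mp hx
  obtain ⟨hky, hTy, hremy⟩ := mem_AllRem_iff.mp hy
  obtain ⟨T, p, k⟩ := x
  obtain ⟨T', p', k'⟩ := y
  simp only at hkx hky hremx hremy
  -- the doubled boxes agree
  have hpp : p = p' := by
    by_contra hne
    have c2 : (toBSVT a b (T', p', k') p').card = 2 := toBSVT_card_two
    have c1 : (toBSVT a b (T, p, k) p').card = 1 := toBSVT_card_one (Ne.symm hne)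
    rw [h] at c1
    omega
  subst hpp
  -- the extra values agree
  have hkk : k = k' := by
    have m1 : k + 1 ∈ toBSVT a b (T, p, k) p := mem_toBSVT.mpr (Or.inr ⟨rfl, rfl⟩)
    have m2 : k' + 1 ∈ toBSVT a b (T', p, k') p := mem_toBSVT.mpr (Or.inr ⟨rfl, rfl⟩)
    rw [h] at m1
    rw [← h] at m2
    have b1 := toBSVT_le hremy m1
    have b2 := toBSVT_le hremx m2
    omega
  subst hkk
  -- the tableaux agree
  have hTT : T = T' := by
    apply Equiv.ext
    intro q
    have m1 : vmap a b T k q ∈ toBSVT a b (T, p, k) q := mem_toBSVT.mpr (Or.inl rfl)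
    rw [h] at m1
    have : vmap a b T k q = vmap a b T' k q := by
      rcases mem_toBSVT.mp m1 with h' | ⟨-, h'⟩
      · exact h'
      · exact absurd h' (vmap_ne T k q)
    apply Fin.val_injective
    unfold vmap at this
    split_ifs at this <;> omega
  subst hTT
  rfl

lemma toBSVT_surj (S : Fin a × Fin b → Finset ℕ) (hS : IsBSVT a b S) :
    ∃ x ∈ AllRem a b, toBSVT a b x = S := by
  obtain ⟨h1, h2, h3, ⟨p0, hp2, hp1⟩, h5⟩ := hS
  have hbound : ∀ q m, m ∈ S q → 1 ≤ m ∧ m ≤ a*b+1 := fun q m hm =>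
    Finset.mem_Icc.mp ((h2 m).mpr ⟨q, hm⟩)
  set y := (S p0).max' (h1 p0) with hy
  have hymem : y ∈ S p0 := Finset.max'_mem _ _
  set mn : Fin a × Fin b → ℕ := fun q => (S q).min' (h1 q) with hmn
  have hmnmem : ∀ q, mn q ∈ S q := fun q => Finset.min'_mem _ _
  have hlt0 : mn p0 < y := Finset.min'_lt_max'_of_card _ (by omega)
  have hney : ∀ q, mn q ≠ y := by
    intro q
    rcases eq_or_ne q p0 with rfl | hq
    · exact ne_of_lt hlt0
    · intro he
      exact (Finset.disjoint_left.mp (h3 q p0 hq) (hmnmem q)) (he ▸ hymem)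
  have hmono : ∀ {q q'}, q < q' → mn q < mn q' := fun {q q'} h =>
    h5 q q' h _ (hmnmem q) _ (hmnmem q')
  have hmninj : ∀ {q q'}, mn q = mn q' → q = q' := by
    intro q q' he
    by_contra hne
    exact (Finset.disjoint_left.mp (h3 q q' hne) (hmnmem q)) (he ▸ hmnmem q')
  have hab : 0 < a*b := by
    obtain ⟨p, -⟩ := (h2 1).mp (by rw [Finset.mem_Icc]; omega)
    exact Nat.mul_pos p.1.pos p.2.pos
  set t : Fin a × Fin b → ℕ := fun q => mn q - 1 - (if y < mn q then 1 else 0) with ht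
  have htlt : ∀ q, t q < a*b := by
    intro q
    have hb := hbound q (mn q) (hmnmem q)
    have hb2 := hbound p0 y hymem
    have hn := hney q
    simp only [ht]; split_ifs <;> omega
  have htinj : ∀ {q q'}, t q = t q' → q = q' := by
    intro q q' he
    apply hmninj
    have b1 := hbound q (mn q) (hmnmem q)
    have b2 := hbound q' (mn q') (hmnmem q')
    have n1 := hney q
    have n2 := hney q'
    simp only [ht] at he
    split_ifs at he <;> omega
  have hcard : Fintype.card (Fin a × Fin b) = Fintype.card (Fin (a*b)) := by simp
  set T : (Fin a × Fin b) ≃ Fin (a*b) := Equiv.ofBijective (fun q => ⟨t q, htlt q⟩)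
      ((Fintype.bijective_iff_injective_and_card _).mpr
        ⟨fun q q' hqq => htinj (congrArg Fin.val hqq), hcard⟩) with hT
  have hTval : ∀ q, (T q : ℕ) = t q := fun q => rfl
  have hTsyt : IsSYT a b T := by
    intro q q' hqq'
    rcases eq_or_ne q q' with rfl | hne
    · exact le_refl _
    · have hm := hmono (lt_of_le_of_ne hqq' hne)
      rw [Fin.le_def, hTval, hTval]
      have n1 := hney q
      have n2 := hney q'
      have b1 := hbound q (mn q) (hmnmem q)
      simp only [ht]; split_ifs <;> omega
  refine ⟨(T, p0, y - 1), ?_, ?_⟩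
  · rw [mem_AllRem_iff]
    have hb2 := hbound p0 y hymem
    refine ⟨by show y - 1 ≤ a*b; omega, hTsyt, ?_, ?_⟩
    · rw [hTval]
      have hb1 := hbound p0 (mn p0) (hmnmem p0)
      simp only [ht]
      rw [if_neg (by omega)]
      omega
    · intro q hq
      have hyq : y < mn q := h5 p0 q hq y hymem _ (hmnmem q)
      rw [hTval]
      simp only [ht]
      rw [if_pos hyq]
      have := hbound q (mn q) (hmnmem q)
      omega
  · funext q
    have hvq : vmap a b T (y-1) q = mn q := by
      unfold vmap
      rw [hTval]
      have n1 := hney q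
      have b1 := hbound q (mn q) (hmnmem q)
      have hb2 := hbound p0 y hymem
      simp only [ht]; split_ifs <;> omega
    unfold toBSVT
    dsimp only
    rcases eq_or_ne q p0 with rfl | hq
    · rw [if_pos rfl, hvq]
      have hy1 : y - 1 + 1 = y := by have := hbound q y hymem; omega
      rw [hy1]
      apply Finset.eq_of_subset_of_card_le
      · intro m hm
        rcases Finset.mem_insert.mp hm with rfl | hm
        · exact hmnmem q
        · rw [Finset.mem_singleton.mp hm]; exact hymem
      · have hcc : ({mn q, y} : Finset ℕ).card = 2 := by
          rw [Finset.card_insert_of_notMem (Finset.notMem_singleton.mpr (hney q)),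
            Finset.card_singleton]
        rw [hp2, hcc]
    · rw [if_neg hq, hvq]
      obtain ⟨c, hc⟩ := Finset.card_eq_one.mp (hp1 q hq)
      have hm := hmnmem q
      rw [hc, Finset.mem_singleton] at hm
      rw [hc, hm]

lemma card_BSVT : Nat.card {S : Fin a × Fin b → Finset ℕ // IsBSVT a b S} = (AllRem a b).card := by
  have hf : Function.Bijective (fun x : {x // x ∈ AllRem a b} =>
      (⟨toBSVT a b x.1, toBSVT_isBSVT x.1 x.2⟩ : {S // IsBSVT a b S})) := by
    constructor
    · intro u v huv
      exact Subtype.ext (toBSVT_inj u.2 v.2 (congrArg Subtype.val huv))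
    · rintro ⟨S, hS⟩
      obtain ⟨x, hx, he⟩ := toBSVT_surj S hS
      exact ⟨⟨x, hx⟩, Subtype.ext he⟩
  rw [← Nat.card_eq_of_bijective _ hf, Nat.card_eq_finsetCard]


/-! ### assembling the count -/

lemma triple_sum (C : (Fin a × Fin b ≃ Fin (a*b)) → (Fin a × Fin b) → ℕ → Prop)
    (f : Fin a × Fin b → ℚ) :
    ∑ x ∈ ((univ ×ˢ univ ×ˢ range (a*b+1)).filter
        fun x => IsSYT a b x.1 ∧ C x.1 x.2.1 x.2.2), f x.2.1
      = ∑ T ∈ univ.filter (fun T => IsSYT a b T), ∑ k ∈ range (a*b+1),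
          ∑ p ∈ univ.filter (fun p => C T p k), f p := by
  rw [Finset.sum_filter, Finset.sum_product]
  conv_rhs => rw [Finset.sum_filter]
  apply Finset.sum_congr rfl
  intro T _
  rw [Finset.sum_product]
  rw [Finset.sum_comm]
  by_cases hT : IsSYT a b T
  · rw [if_pos hT]
    apply Finset.sum_congr rfl
    intro k _
    rw [Finset.sum_filter]
    apply Finset.sum_congr rfl
    intro p _
    simp [hT]
  · rw [if_neg hT]
    apply Finset.sum_eq_zero
    intro k _
    apply Finset.sum_eq_zero
    intro p _
    simp [hT]

lemma grand_total :
    ((a:ℚ) + b) * ((AllRem a b).card : ℚ)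
      = (a*b : ℚ) * ((a*b : ℚ) + 1) * (((univ.filter (fun T => IsSYT a b T)).card : ℚ)) := by
  have e1 : ∑ x ∈ AllAdm a b, wA a b x.2.1 - ∑ x ∈ AllRem a b, wR a b x.2.1
      = ((a*b+1 : ℕ) : ℚ) * ((a*b : ℚ)) * (((univ.filter (fun T => IsSYT a b T)).card : ℚ)) := by
    rw [AllAdm, AllRem, triple_sum (addC a b) (wA a b), triple_sum (remC a b) (wR a b),
      ← Finset.sum_sub_distrib]
    have : ∀ T ∈ univ.filter (fun T => IsSYT a b T),
        (∑ k ∈ range (a*b+1), ∑ p ∈ univ.filter (fun p => addC a b T p k), wA a b p)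
          - (∑ k ∈ range (a*b+1), ∑ p ∈ univ.filter (fun p => remC a b T p k), wR a b p)
        = ((a*b+1 : ℕ) : ℚ) * (a*b : ℚ) := by
      intro T hT
      rw [Finset.mem_filter] at hT
      rw [← Finset.sum_sub_distrib]
      rw [Finset.sum_congr rfl (fun k _ => key_identity hT.2 k)]
      rw [Finset.sum_const, Finset.card_range, nsmul_eq_mul]
    rw [Finset.sum_congr rfl this, Finset.sum_const, nsmul_eq_mul]
    ring
  have e2 : ∑ x ∈ AllAdm a b, wA a b x.2.1 = ∑ x ∈ AllRem a b, wA a b x.2.1 :=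
    sum_AllAdm_eq_sum_AllRem (wA a b)
  have e3 : ∀ p : Fin a × Fin b, wA a b p - wR a b p = (a : ℚ) + b := by
    intro p; unfold wA wR; ring
  have e4 : ∑ x ∈ AllRem a b, (wA a b x.2.1 - wR a b x.2.1)
      = ((a:ℚ) + b) * ((AllRem a b).card : ℚ) := by
    rw [Finset.sum_congr rfl (fun x _ => e3 x.2.1), Finset.sum_const, nsmul_eq_mul]
    ring
  rw [← e4]
  rw [Finset.sum_sub_distrib, ← e2]
  rw [e1]
  push_cast
  ring

end
end Stmt5

/-- `#SYT⁺¹(a×b) = (ab/(a+b))·(ab+1)·#SYT(a×b)`. -/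
theorem stmt_5 (a b : ℕ) (ha : 1 ≤ a) (hb : 1 ≤ b) :
    (Nat.card {S : Fin a × Fin b → Finset ℕ // IsBSVT a b S} : ℚ)
      = ((a : ℚ) * b) / ((a : ℚ) + b) * ((a : ℚ) * b + 1) *
        (Nat.card {T : Fin a × Fin b ≃ Fin (a * b) // IsSYT a b T} : ℚ) := by
  classical
  have hab : (0:ℚ) < (a:ℚ) + b := by
    have : (1:ℚ) ≤ (a:ℚ) := by exact_mod_cast ha
    have : (1:ℚ) ≤ (b:ℚ) := by exact_mod_cast hb
    linarith [show (1:ℚ) ≤ (a:ℚ) from by exact_mod_cast ha]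
  have hB := Stmt5.card_BSVT (a := a) (b := b)
  have hN : Nat.card {T : Fin a × Fin b ≃ Fin (a * b) // IsSYT a b T}
      = (Finset.univ.filter (fun T => IsSYT a b T)).card := by
    rw [Nat.card_eq_fintype_card, Fintype.card_subtype]
  rw [hB, hN]
  have := Stmt5.grand_total (a := a) (b := b)
  rw [div_mul_eq_mul_div, div_mul_eq_mul_div, eq_div_iff (ne_of_gt hab)]
  push_cast at this ⊢
  linarith [this]
end

section
/- For any finite graded poset P with rank function rk and rank rk(P), the rank distribution μ_rk^q, which assigns to the ideal rk⁻¹({0,...,i}) probability q^{rk(P)−i}/[rk(P)+2]_q for i = −1, 0, ..., rk(P) (and probability 0 to all other ideals), is q-toggle-symmetric. -/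
open scoped Classical

variable {P : Type*} [Fintype P] [PartialOrder P]

/-- The `q`-toggleability statistic `T_p^q = T_in,p − q·T_out,p`. -/
noncomputable def Tq (q : ℝ) (p : P) (I : Finset P) : ℝ :=
  (if p ∉ I ∧ ∀ x ∉ I, ¬ x < p then (1 : ℝ) else 0)
    - q * (if p ∈ I ∧ ∀ x ∈ I, ¬ p < x then (1 : ℝ) else 0)

lemma covBy_of_lt_max' {x p : P} (h : x < p) : ∃ z, x ≤ z ∧ z ⋖ p := by
  obtain ⟨z, hz, hmax⟩ : ∃ z ∈ (Finset.univ.filter fun z => x ≤ z ∧ z < p),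
      ∀ y ∈ (Finset.univ.filter fun z => x ≤ z ∧ z < p), ¬ z < y := by
    obtain ⟨z, hz, hm⟩ := Finset.exists_maximal
      (s := Finset.univ.filter fun z => x ≤ z ∧ z < p) ⟨x, by simp [h]⟩
    exact ⟨z, hz, fun y hy hzy => lt_irrefl _ (lt_of_lt_of_le hzy (hm hy hzy.le))⟩
  simp only [Finset.mem_filter, Finset.mem_univ, true_and] at hz hmax
  exact ⟨z, hz.1, hz.2, fun w hzw hwp => hmax w ⟨hz.1.trans hzw.le, hwp⟩ hzw⟩

lemma covBy_of_gt_min' {x p : P} (h : p < x) : ∃ z, p ⋖ z ∧ z ≤ x := by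
  obtain ⟨z, hz, hmin⟩ : ∃ z ∈ (Finset.univ.filter fun z => p < z ∧ z ≤ x),
      ∀ y ∈ (Finset.univ.filter fun z => p < z ∧ z ≤ x), ¬ y < z := by
    obtain ⟨z, hz, hm⟩ := Finset.exists_minimal
      (s := Finset.univ.filter fun z => p < z ∧ z ≤ x) ⟨x, by simp [h]⟩
    exact ⟨z, hz, fun y hy hyz => lt_irrefl _ (lt_of_lt_of_le hyz (hm hy hyz.le))⟩
  simp only [Finset.mem_filter, Finset.mem_univ, true_and] at hz hmin
  exact ⟨z, ⟨hz.1, fun w hpw hwz => hmin w ⟨hpw, hwz.le.trans hz.2⟩ hwz⟩, hz.2⟩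

lemma rk_lt' (rk : P → ℕ) (hcov : ∀ p p' : P, p ⋖ p' → rk p' = rk p + 1) :
    ∀ p x : P, x < p → rk x < rk p := by
  intro p
  induction p using WellFoundedLT.induction with
  | _ p IH =>
    intro x hxp
    obtain ⟨z, hxz, hzp⟩ := covBy_of_lt_max' hxp
    have h1 : rk p = rk z + 1 := hcov z p hzp
    rcases eq_or_lt_of_le hxz with rfl | hlt
    · omega
    · have := IH z hzp.lt x hlt; omega


/-- for a finite graded poset `P` with rank function `rk` and rank `r`,
the rank distribution — which puts probability `q^{r-i}/[r+2]_q` on the order ideal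
`rk⁻¹({0,…,i})` for `i = −1, 0, …, r` — is `q`-toggle-symmetric: for every `p ∈ P`,
`Σ_{i=-1}^{r} (q^{r-i}/[r+2]_q) · T_p^q(rk⁻¹({0,…,i})) = 0`. -/
theorem stmt_14 (q : ℝ) (hq : 0 < q) (rk : P → ℕ) (r : ℕ)
    (hminrk : ∀ p : P, (∀ x, ¬ x < p) → rk p = 0)
    (hcov : ∀ p p' : P, p ⋖ p' → rk p' = rk p + 1)
    (hmaxrk : ∀ p : P, (∀ x, ¬ p < x) → rk p = r)
    (p : P) :
    ∑ i ∈ Finset.Icc (-1 : ℤ) (r : ℤ),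
        (q ^ ((r : ℤ) - i) / ∑ j ∈ Finset.Icc (-1 : ℤ) (r : ℤ), q ^ ((r : ℤ) - j)) *
          Tq q p (Finset.univ.filter fun x => (rk x : ℤ) ≤ i) = 0 := by
  have hq0 : q ≠ 0 := hq.ne'
  have hlt : ∀ a b : P, a < b → rk a < rk b := fun a b h => rk_lt' rk hcov b a h
  have hler : ∀ a : P, rk a ≤ r := by
    intro a
    obtain ⟨m, hm, hmax⟩ : ∃ m ∈ (Finset.univ.filter fun z => a ≤ z),
        ∀ y ∈ (Finset.univ.filter fun z => a ≤ z), ¬ m < y := by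
      obtain ⟨m, hm, hm'⟩ := Finset.exists_maximal
        (s := Finset.univ.filter fun z => a ≤ z) ⟨a, by simp⟩
      exact ⟨m, hm, fun y hy hmy => lt_irrefl _ (lt_of_lt_of_le hmy (hm' hy hmy.le))⟩
    simp only [Finset.mem_filter, Finset.mem_univ, true_and] at hm hmax
    have hmm : rk m = r := hmaxrk m (fun x hx => hmax x (hm.trans hx.le) hx)
    rcases eq_or_lt_of_le hm with rfl | h
    · omega
    · have := hlt a m h; omega
  have hab : ((rk p : ℤ) - 1) ≠ (rk p : ℤ) := by omega
  set Z := ∑ j ∈ Finset.Icc (-1 : ℤ) (r : ℤ), q ^ ((r : ℤ) - j) with hZ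
  have key : ∀ i ∈ Finset.Icc (-1:ℤ) (r:ℤ),
      Tq q p (Finset.univ.filter fun x => (rk x : ℤ) ≤ i)
        = (if i = (rk p : ℤ) - 1 then (1:ℝ) else 0)
          - q * (if i = (rk p : ℤ) then 1 else 0) := by
    intro i hi
    simp only [Finset.mem_Icc] at hi
    unfold Tq
    congr 1
    · by_cases h : i = (rk p : ℤ) - 1
      · rw [if_pos h, if_pos]
        constructor
        · simp only [Finset.mem_filter, Finset.mem_univ, true_and]; omega
        · intro x hx hxp
          simp only [Finset.mem_filter, Finset.mem_univ, true_and, not_le] at hx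
          have := hlt x p hxp; omega
      · rw [if_neg h, if_neg]
        rintro ⟨hp, hall⟩
        simp only [Finset.mem_filter, Finset.mem_univ, true_and, not_le] at hp
        have hrk1 : 1 ≤ rk p := by omega
        have hnotmin : ∃ x, x < p := by
          by_contra hc
          push_neg at hc
          have := hminrk p hc
          omega
        obtain ⟨x0, hx0⟩ := hnotmin
        obtain ⟨z, _, hzp⟩ := covBy_of_lt_max' hx0
        have hz : rk p = rk z + 1 := hcov z p hzp
        exact hall z (by simp only [Finset.mem_filter, Finset.mem_univ, true_and, not_le]; omega)
          hzp.lt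
    · congr 1
      by_cases h : i = (rk p : ℤ)
      · rw [if_pos h, if_pos]
        constructor
        · simp only [Finset.mem_filter, Finset.mem_univ, true_and]; omega
        · intro x hx hpx
          simp only [Finset.mem_filter, Finset.mem_univ, true_and] at hx
          have := hlt p x hpx; omega
      · rw [if_neg h, if_neg]
        rintro ⟨hp, hall⟩
        simp only [Finset.mem_filter, Finset.mem_univ, true_and] at hp
        have hpr : rk p < r := by omega
        have hnotmax : ∃ x, p < x := by
          by_contra hc; push_neg at hc
          have := hmaxrk p hc; omega
        obtain ⟨x0, hx0⟩ := hnotmax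
        obtain ⟨z, hpz, _⟩ := covBy_of_gt_min' hx0
        have hz : rk z = rk p + 1 := hcov p z hpz
        exact hall z (by simp only [Finset.mem_filter, Finset.mem_univ, true_and]; omega) hpz.lt
  rw [Finset.sum_congr rfl (fun i hi => by rw [key i hi])]
  have step : ∀ i ∈ Finset.Icc (-1:ℤ) (r:ℤ),
      (q ^ ((r:ℤ) - i) / Z) *
        ((if i = (rk p : ℤ) - 1 then (1:ℝ) else 0) - q * (if i = (rk p : ℤ) then 1 else 0))
      = (if i = (rk p : ℤ) - 1 then q ^ ((r:ℤ) - i) / Z else 0)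
        - (if i = (rk p : ℤ) then q * (q ^ ((r:ℤ) - i) / Z) else 0) := by
    intro i _
    split_ifs with h1 h2 h2
    · exact absurd (h1.symm.trans h2) hab
    · ring
    · ring
    · ring
  rw [Finset.sum_congr rfl step, Finset.sum_sub_distrib,
    Finset.sum_ite_eq' _ ((rk p : ℤ) - 1), Finset.sum_ite_eq' _ (rk p : ℤ)]
  have h1 : ((rk p : ℤ) - 1) ∈ Finset.Icc (-1:ℤ) (r:ℤ) := by
    simp only [Finset.mem_Icc]; have := hler p; omega
  have h2 : ((rk p : ℤ)) ∈ Finset.Icc (-1:ℤ) (r:ℤ) := by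
    simp only [Finset.mem_Icc]; have := hler p; omega
  rw [if_pos h1, if_pos h2]
  have hexp : (r:ℤ) - ((rk p : ℤ) - 1) = ((r:ℤ) - (rk p : ℤ)) + 1 := by ring
  rw [hexp, zpow_add_one₀ hq0]
  ring
end

section
/- The number of standard Young tableaux of shape 2×b equals the Catalan number Cat(b) = binom(2b,b)/(b+1), via the bijection sending a tableau to the lattice path whose i-th step is up if i is in the first row and down if i is in the second row; the resulting path is a Dyck path of length 2b, and descents of the tableau correspond to valleys of the path. -/
open scoped Classical

/-- A standard Young tableau of shape `2×b`: an order-preserving bijection from the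
grid poset `Fin 2 × Fin b` (componentwise order) to `Fin (2*b)`. -/
def IsSYT2 (b : ℕ) (T : Fin 2 × Fin b ≃ Fin (2 * b)) : Prop :=
  ∀ p q : Fin 2 × Fin b, p ≤ q → T p ≤ T q

/-- The lattice path of a tableau: the `i`-th step is up (`true`) if the value `i+1`
(0-indexed position `i`) lies in the first row, down (`false`) if in the second row. -/
def toPath (b : ℕ) (T : Fin 2 × Fin b ≃ Fin (2 * b)) : Fin (2 * b) → Bool :=
  fun i => decide ((T.symm i).1 = 0)

/-- Height of the path after `j` steps (up = +1, down = −1). -/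
def dhgt (b : ℕ) (s : Fin (2 * b) → Bool) (j : ℕ) : ℤ :=
  ∑ k ∈ Finset.range j, if h : k < 2 * b then (if s ⟨k, h⟩ then (1 : ℤ) else -1) else 0

/-- A Dyck path of length `2b`: ends at height `0` and stays weakly above the x-axis. -/
def IsDyck (b : ℕ) (s : Fin (2 * b) → Bool) : Prop :=
  dhgt b s (2 * b) = 0 ∧ ∀ j ≤ 2 * b, 0 ≤ dhgt b s j

/-- The valley set of a path: indices `i ∈ {1,…,2b-1}` such that the `i`-th step
(0-indexed `i-1`) is down and the `(i+1)`-st step (0-indexed `i`) is up. -/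
noncomputable def Val (b : ℕ) (s : Fin (2 * b) → Bool) : Finset ℕ :=
  (Finset.Ico 1 (2 * b)).filter fun i =>
    ∀ h : i < 2 * b,
      s ⟨i - 1, lt_of_le_of_lt (Nat.sub_le i 1) h⟩ = false ∧ s ⟨i, h⟩ = true

/-- Natural descents of a `2×b` SYT: entries `i` such that `i+1` lies in a higher row
than `i` (value `i` sits at 0-indexed position `i-1`). -/
noncomputable def DesT (b : ℕ) (T : Fin 2 × Fin b ≃ Fin (2 * b)) : Finset ℕ :=
  (Finset.Ico 1 (2 * b)).filter fun i =>
    ∀ h : i < 2 * b,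
      ((T.symm ⟨i, h⟩).1 : ℕ)
        < ((T.symm ⟨i - 1, lt_of_le_of_lt (Nat.sub_le i 1) h⟩).1 : ℕ)


namespace SYT18
variable {b : ℕ}
def sN (b : ℕ) (s : Fin (2 * b) → Bool) (k : ℕ) : Bool :=
  if h : k < 2 * b then s ⟨k, h⟩ else false
def cnt (b : ℕ) (s : Fin (2 * b) → Bool) (v : Bool) (j : ℕ) : ℕ :=
  ((Finset.range j).filter fun k => sN b s k = v).card

lemma sN_lt (s : Fin (2 * b) → Bool) {k : ℕ} (h : k < 2 * b) : sN b s k = s ⟨k, h⟩ := dif_pos h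

variable {T : Fin 2 × Fin b ≃ Fin (2 * b)}

lemma row_lt_iff (hT : IsSYT2 b T) (r : Fin 2) {c c' : Fin b} :
    T (r, c) < T (r, c') ↔ c < c' := by
  constructor
  · intro h
    by_contra hc
    push_neg at hc
    exact absurd (hT (r, c') (r, c) ⟨le_refl r, hc⟩) (not_le.2 h)
  · intro h
    exact lt_of_le_of_ne (hT (r, c) (r, c') ⟨le_refl r, le_of_lt h⟩)
      (fun he => absurd (T.injective he) (by simp [Prod.ext_iff, Fin.ext_iff]; omega))

lemma toPath_row {i : Fin (2 * b)} : toPath b T i = decide ((T.symm i).1 = 0) := rfl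

/-- a step has value `decide (r = 0)` iff its row is `r`. -/
lemma path_eq_iff (r : Fin 2) (i : Fin (2 * b)) :
    toPath b T i = decide (r = 0) ↔ (T.symm i).1 = r := by
  have h2 : (T.symm i).1 = 0 ∨ (T.symm i).1 = 1 := by omega
  have h3 : r = 0 ∨ r = 1 := by omega
  rcases h2 with h2 | h2 <;> rcases h3 with h3 | h3 <;>
    simp [toPath, h2, h3] <;> omega

lemma rank (hT : IsSYT2 b T) (r : Fin 2) (c : Fin b) :
    cnt b (toPath b T) (decide (r = 0)) ((T (r, c)) : ℕ) = (c : ℕ) := by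
  rw [cnt, ← Finset.card_range (c : ℕ)]
  refine Finset.card_bij' (i := fun k hk => ((T.symm ⟨k, by
      have := Finset.mem_filter.1 hk
      exact lt_trans (Finset.mem_range.1 this.1) (T (r, c)).2⟩).2 : ℕ))
    (j := fun c' hc' => (T (r, ⟨c', lt_trans (Finset.mem_range.1 hc') c.2⟩) : ℕ))
    ?_ ?_ ?_ ?_
  · intro k hk
    obtain ⟨hk1, hk2⟩ := Finset.mem_filter.1 hk
    rw [Finset.mem_range] at hk1
    have hklt : k < 2 * b := lt_trans hk1 (T (r, c)).2
    rw [sN_lt _ hklt] at hk2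
    have hrow : (T.symm ⟨k, hklt⟩).1 = r := (path_eq_iff r _).1 hk2
    have he : T (r, (T.symm ⟨k, hklt⟩).2) = ⟨k, hklt⟩ := by
      rw [← hrow, Prod.mk.eta, T.apply_symm_apply]
    have : T (r, (T.symm ⟨k, hklt⟩).2) < T (r, c) := by rw [he]; exact hk1
    exact Finset.mem_range.2 ((row_lt_iff hT r).1 this)
  · intro c' hc'
    rw [Finset.mem_range] at hc'
    have hcc : (⟨c', lt_trans hc' c.2⟩ : Fin b) < c := hc'
    have hlt : T (r, ⟨c', lt_trans hc' c.2⟩) < T (r, c) := (row_lt_iff hT r).2 hcc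
    refine Finset.mem_filter.2 ⟨Finset.mem_range.2 hlt, ?_⟩
    rw [sN_lt _ (T (r, _)).2, Fin.eta]
    exact (path_eq_iff r _).2 (by rw [T.symm_apply_apply])
  · intro k hk
    obtain ⟨hk1, hk2⟩ := Finset.mem_filter.1 hk
    rw [Finset.mem_range] at hk1
    have hklt : k < 2 * b := lt_trans hk1 (T (r, c)).2
    rw [sN_lt _ hklt] at hk2
    have hrow : (T.symm ⟨k, hklt⟩).1 = r := (path_eq_iff r _).1 hk2
    have he : T (r, ⟨((T.symm ⟨k, hklt⟩).2 : ℕ), (T.symm ⟨k, hklt⟩).2.2⟩) = ⟨k, hklt⟩ := by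
      rw [Fin.eta, ← hrow, Prod.mk.eta, T.apply_symm_apply]
    simp only [he]
  · intro c' hc'
    simp only [Fin.eta, T.symm_apply_apply]

lemma col_eq (hT : IsSYT2 b T) (i : Fin (2 * b)) :
    ((T.symm i).2 : ℕ) = cnt b (toPath b T) (toPath b T i) (i : ℕ) := by
  have h := rank hT (T.symm i).1 (T.symm i).2
  rw [Prod.mk.eta, T.apply_symm_apply] at h
  exact h.symm

lemma cnt_total (T : Fin 2 × Fin b ≃ Fin (2 * b)) (v : Bool) :
    cnt b (toPath b T) v (2 * b) = b := by
  have h1 : cnt b (toPath b T) v (2 * b)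
      = (Finset.univ.filter fun i : Fin (2 * b) => toPath b T i = v).card := by
    rw [cnt, Finset.card_filter, Finset.card_filter,
      ← Fin.sum_univ_eq_sum_range (fun k => if sN b (toPath b T) k = v then 1 else 0) (2 * b)]
    apply Finset.sum_congr rfl
    intro i _
    rw [sN_lt _ i.2, Fin.eta]
  rw [h1, ← Fintype.card_subtype]
  have e : {i : Fin (2 * b) // toPath b T i = v} ≃ {p : Fin 2 × Fin b // decide (p.1 = 0) = v} :=
    Equiv.subtypeEquiv (q := fun p : Fin 2 × Fin b => decide (p.1 = 0) = v) T.symm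
      (fun i => Iff.rfl)
  rw [Fintype.card_congr e]
  have e2 : {p : Fin 2 × Fin b // decide (p.1 = 0) = v} ≃ Fin b :=
    { toFun := fun p => p.1.2
      invFun := fun c => ⟨((if v then 0 else 1 : Fin 2), c), by cases v <;> simp⟩
      left_inv := fun p => by
        obtain ⟨⟨r, c⟩, hp⟩ := p
        have : r = 0 ∨ r = 1 := by omega
        apply Subtype.ext
        rcases this with h | h <;> simp [h] at hp ⊢ <;> simp [← hp]
      right_inv := fun c => rfl }
  rw [Fintype.card_congr e2, Fintype.card_fin]

lemma cnt_succ (s : Fin (2 * b) → Bool) (v : Bool) (j : ℕ) :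
    cnt b s v (j + 1) = cnt b s v j + if sN b s j = v then 1 else 0 := by
  unfold cnt
  rw [Finset.range_add_one, Finset.filter_insert]
  split <;> simp [Finset.card_insert_of_notMem]

lemma cnt_mono (s : Fin (2 * b) → Bool) (v : Bool) {j j' : ℕ} (h : j ≤ j') :
    cnt b s v j ≤ cnt b s v j' :=
  Finset.card_le_card (Finset.filter_subset_filter _ (Finset.range_subset_range.2 h))

lemma cnt_add (s : Fin (2 * b) → Bool) (j : ℕ) (hj : j ≤ 2 * b) :
    cnt b s true j + cnt b s false j = j := by
  unfold cnt
  have h2 : (Finset.filter (fun k => sN b s k = false) (Finset.range j))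
      = (Finset.filter (fun k => ¬ sN b s k = true) (Finset.range j)) := by
    apply Finset.filter_congr; intro k _; simp
  rw [h2, Finset.card_filter_add_card_filter_not, Finset.card_range]

lemma dhgt_eq (s : Fin (2 * b) → Bool) (j : ℕ) (hj : j ≤ 2 * b) :
    dhgt b s j = (cnt b s true j : ℤ) - (cnt b s false j : ℤ) := by
  induction j with
  | zero => simp [dhgt, cnt]
  | succ n ih =>
      have hn : n < 2 * b := hj
      rw [dhgt, Finset.sum_range_succ, ← dhgt, ih (le_of_lt hn),
        cnt_succ, cnt_succ, dif_pos hn]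
      have hs : sN b s n = s ⟨n, hn⟩ := dif_pos hn
      cases h : s ⟨n, hn⟩ <;> simp [hs, h] <;> ring

lemma dhgt_eq' (s : Fin (2 * b) → Bool) (j : ℕ) (hj : j ≤ 2 * b) :
    dhgt b s j = 2 * (cnt b s true j : ℤ) - j := by
  rw [dhgt_eq s j hj]
  have := cnt_add s j hj
  omega


lemma prefix_le (hT : IsSYT2 b T) {j : ℕ} (hj : j ≤ 2 * b) :
    cnt b (toPath b T) false j ≤ cnt b (toPath b T) true j := by
  set s := toPath b T with hs
  have hb : ∀ c, c < cnt b s false j → c < b := fun c hc =>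
    lt_of_lt_of_le hc (le_of_le_of_eq (cnt_mono s false hj) (cnt_total T false))
  have step1 : ∀ c (hc : c < cnt b s false j), ((T (1, ⟨c, hb c hc⟩)) : ℕ) < j := by
    intro c hc
    by_contra hcon
    push_neg at hcon
    have hle : ((Finset.range j).filter fun k => sN b s k = false).card
        ≤ (Finset.range c).card := by
      apply Finset.card_le_card_of_injOn (fun k => cnt b s false k)
      · intro k hk
        obtain ⟨hk1, hk2⟩ := Finset.mem_filter.1 hk
        rw [Finset.mem_range] at hk1
        have hklt : k < 2 * b := lt_of_lt_of_le hk1 hj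
        rw [sN_lt _ hklt] at hk2
        have hrow : (T.symm ⟨k, hklt⟩).1 = 1 := (path_eq_iff 1 _).1 (by simpa using hk2)
        have hcol : ((T.symm ⟨k, hklt⟩).2 : ℕ) = cnt b s false k := by
          rw [col_eq hT, ← hs, hk2]
        have he : T (1, (T.symm ⟨k, hklt⟩).2) = ⟨k, hklt⟩ := by
          rw [← hrow, Prod.mk.eta, T.apply_symm_apply]
        have hlt : T (1, (T.symm ⟨k, hklt⟩).2) < T (1, ⟨c, hb c hc⟩) := by
          rw [he]
          exact Fin.lt_def.2 (lt_of_lt_of_le hk1 hcon)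
        have h5 := (row_lt_iff hT 1).1 hlt
        simp only [Finset.mem_coe]
        rw [Finset.mem_range, ← hcol]
        exact h5
      · intro k hk k' hk' hkk
        simp only at hkk
        obtain ⟨hk1, hk2⟩ := Finset.mem_filter.1 hk
        obtain ⟨hk1', hk2'⟩ := Finset.mem_filter.1 hk'
        rw [Finset.mem_range] at hk1 hk1'
        have hklt : k < 2 * b := lt_of_lt_of_le hk1 hj
        have hklt' : k' < 2 * b := lt_of_lt_of_le hk1' hj
        rw [sN_lt _ hklt] at hk2
        rw [sN_lt _ hklt'] at hk2'
        have hrow : (T.symm ⟨k, hklt⟩).1 = 1 := (path_eq_iff 1 _).1 (by simpa using hk2)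
        have hrow' : (T.symm ⟨k', hklt'⟩).1 = 1 := (path_eq_iff 1 _).1 (by simpa using hk2')
        have hcol : ((T.symm ⟨k, hklt⟩).2 : ℕ) = cnt b s false k := by
          rw [col_eq hT, ← hs, hk2]
        have hcol' : ((T.symm ⟨k', hklt'⟩).2 : ℕ) = cnt b s false k' := by
          rw [col_eq hT, ← hs, hk2']
        have heq : T.symm ⟨k, hklt⟩ = T.symm ⟨k', hklt'⟩ := by
          apply Prod.ext
          · rw [hrow, hrow']
          · apply Fin.ext; rw [hcol, hcol', hkk]
        have := T.symm.injective heq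
        exact congrArg Fin.val (show (⟨k, hklt⟩ : Fin (2*b)) = ⟨k', hklt'⟩ from this)
    rw [Finset.card_range] at hle
    have : cnt b s false j ≤ c := hle
    omega
  have hle2 : (Finset.range (cnt b s false j)).card
      ≤ ((Finset.range j).filter fun k => sN b s k = true).card := by
    apply Finset.card_le_card_of_injOn
      (fun c => if h : c < b then ((T (0, ⟨c, h⟩)) : ℕ) else 0)
    · intro c hc
      simp only [Finset.mem_coe] at hc ⊢
      rw [Finset.mem_range] at hc
      rw [dif_pos (hb c hc)]
      refine Finset.mem_filter.2 ⟨Finset.mem_range.2 ?_, ?_⟩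
      · calc ((T (0, ⟨c, hb c hc⟩)) : ℕ) < ((T (1, ⟨c, hb c hc⟩)) : ℕ) := by
              have : T (0, ⟨c, hb c hc⟩) < T (1, ⟨c, hb c hc⟩) :=
                lt_of_le_of_ne (hT _ _ (Prod.mk_le_mk.2 ⟨by decide, le_refl _⟩))
                  (fun he => by
                    have := T.injective he
                    simp [Prod.ext_iff] at this)
              exact this
          _ < j := step1 c hc
      · rw [sN_lt _ (T (0, ⟨c, hb c hc⟩)).2, Fin.eta]
        have := (path_eq_iff (T := T) 0 (T (0, ⟨c, hb c hc⟩))).2 (by rw [T.symm_apply_apply])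
        simpa using this
    · intro c hc c' hc' hcc
      rw [Finset.mem_coe, Finset.mem_range] at hc hc'
      simp only at hcc
      rw [dif_pos (hb c hc), dif_pos (hb c' hc')] at hcc
      have := T.injective (Fin.ext hcc)
      simpa [Prod.ext_iff, Fin.ext_iff] using this
  rw [Finset.card_range] at hle2
  exact hle2

lemma toPath_isDyck (hT : IsSYT2 b T) : IsDyck b (toPath b T) := by
  constructor
  · rw [dhgt_eq _ _ (le_refl _), cnt_total, cnt_total]; ring
  · intro j hj
    rw [dhgt_eq _ _ hj]
    have := prefix_le hT hj
    omega

lemma injOn : Set.InjOn (toPath b) {T | IsSYT2 b T} := by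
  intro T hT T' hT' h
  have hsymm : ∀ i, T.symm i = T'.symm i := by
    intro i
    apply Prod.ext
    · have h1 : toPath b T' i = decide ((T'.symm i).1 = 0) := rfl
      exact (path_eq_iff _ i).1 (by rw [h, h1])
    · apply Fin.ext
      rw [col_eq hT, col_eq hT', h]
  have : T.symm = T'.symm := Equiv.ext hsymm
  have := congrArg Equiv.symm this
  simpa using this


section surj
variable (s : Fin (2 * b) → Bool)

lemma dyck_cnt_total (hs : IsDyck b s) (v : Bool) : cnt b s v (2 * b) = b := by
  have h1 := hs.1
  rw [dhgt_eq s _ (le_refl _)] at h1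
  have h2 := cnt_add s (2 * b) (le_refl _)
  cases v <;> omega

lemma dyck_prefix (hs : IsDyck b s) {j : ℕ} (hj : j ≤ 2 * b) :
    cnt b s false j ≤ cnt b s true j := by
  have := hs.2 j hj
  rw [dhgt_eq s j hj] at this
  omega

lemma cnt_succ_self (i : Fin (2 * b)) :
    cnt b s (s i) ((i : ℕ) + 1) = cnt b s (s i) (i : ℕ) + 1 := by
  rw [cnt_succ, sN_lt s i.2, Fin.eta, if_pos rfl]

lemma cnt_lt_b (hs : IsDyck b s) (i : Fin (2 * b)) : cnt b s (s i) (i : ℕ) < b := by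
  have h1 := cnt_succ_self s i
  have h2 : cnt b s (s i) ((i : ℕ) + 1) ≤ cnt b s (s i) (2 * b) := cnt_mono _ _ i.2
  rw [dyck_cnt_total s hs] at h2
  omega

/-- the inverse tableau map of a Dyck path. -/
noncomputable def gP (hs : IsDyck b s) : Fin (2 * b) → Fin 2 × Fin b :=
  fun i => ((if s i then 0 else 1 : Fin 2), ⟨cnt b s (s i) (i : ℕ), cnt_lt_b s hs i⟩)

lemma gP_inj (hs : IsDyck b s) : Function.Injective (gP s hs) := by
  intro i j h
  rw [Prod.ext_iff] at h
  obtain ⟨h1, h2⟩ := h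
  have hv : s i = s j := by
    cases hi : s i <;> cases hj : s j <;> simp [gP, hi, hj] at h1 ⊢ <;> exact absurd h1 (by decide)
  have h2' : cnt b s (s i) (i : ℕ) = cnt b s (s i) (j : ℕ) := by
    have := congrArg Fin.val h2
    simp only [gP] at this
    rw [this, hv]
  apply Fin.ext
  by_contra hne
  rcases Nat.lt_or_ge (i : ℕ) (j : ℕ) with hlt | hge
  · have ha := cnt_succ_self s i
    have hb2 : cnt b s (s i) ((i : ℕ) + 1) ≤ cnt b s (s i) (j : ℕ) := cnt_mono _ _ hlt
    omega
  · have hlt : (j : ℕ) < (i : ℕ) := by omega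
    have ha := cnt_succ_self s j
    have hb2 : cnt b s (s j) ((j : ℕ) + 1) ≤ cnt b s (s j) (i : ℕ) := cnt_mono _ _ hlt
    rw [← hv] at ha hb2
    omega

lemma gP_bij (hs : IsDyck b s) : Function.Bijective (gP s hs) := by
  rw [Fintype.bijective_iff_injective_and_card]
  refine ⟨gP_inj s hs, ?_⟩
  simp [Fintype.card_prod]

/-- the tableau associated to a Dyck path. -/
noncomputable def mkT (hs : IsDyck b s) : Fin 2 × Fin b ≃ Fin (2 * b) :=
  (Equiv.ofBijective (gP s hs) (gP_bij s hs)).symm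

lemma mkT_symm_apply (hs : IsDyck b s) (i : Fin (2 * b)) :
    (mkT s hs).symm i = gP s hs i := by
  simp [mkT]

lemma toPath_mkT (hs : IsDyck b s) : toPath b (mkT s hs) = s := by
  funext i
  rw [toPath, mkT_symm_apply]
  cases h : s i <;> simp [gP, h]

lemma mkT_isSYT (hs : IsDyck b s) : IsSYT2 b (mkT s hs) := by
  intro p q hpq
  set i := mkT s hs p with hi
  set j := mkT s hs q with hj
  have hgi : gP s hs i = p := by rw [← mkT_symm_apply, hi, Equiv.symm_apply_apply]
  have hgj : gP s hs j = q := by rw [← mkT_symm_apply, hj, Equiv.symm_apply_apply]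
  rw [← hgi, ← hgj] at hpq
  rw [Prod.le_def] at hpq
  obtain ⟨h1, h2⟩ := hpq
  have h2' : cnt b s (s i) (i : ℕ) ≤ cnt b s (s j) (j : ℕ) := h2
  show i ≤ j
  rw [Fin.le_def]
  cases hsi : s i <;> cases hsj : s j <;> rw [hsi, hsj] at h2'
  · -- false false
    by_contra hc
    push_neg at hc
    have ha := cnt_succ_self s j
    rw [hsj] at ha
    have hb2 : cnt b s false ((j : ℕ) + 1) ≤ cnt b s false (i : ℕ) := cnt_mono _ _ hc
    omega
  · -- s i = false, s j = true: rows 1 ≤ 0 impossible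
    exfalso
    simp [gP, hsi, hsj] at h1
  · -- s i = true, s j = false
    by_contra hc
    push_neg at hc
    have ha := cnt_succ_self s j
    rw [hsj] at ha
    have hpre := dyck_prefix s hs (j := (j : ℕ) + 1) j.2
    have hb2 : cnt b s true ((j : ℕ) + 1) ≤ cnt b s true (i : ℕ) := cnt_mono _ _ hc
    omega
  · -- true true
    by_contra hc
    push_neg at hc
    have ha := cnt_succ_self s j
    rw [hsj] at ha
    have hb2 : cnt b s true ((j : ℕ) + 1) ≤ cnt b s true (i : ℕ) := cnt_mono _ _ hc
    omega

end surj

lemma bijOn : Set.BijOn (toPath b) {T | IsSYT2 b T} {s | IsDyck b s} :=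
  ⟨fun T hT => toPath_isDyck hT, injOn,
   fun s hs => ⟨mkT s hs, mkT_isSYT s hs, toPath_mkT s hs⟩⟩


lemma des_eq_val (T : Fin 2 × Fin b ≃ Fin (2 * b)) : DesT b T = Val b (toPath b T) := by
  unfold DesT Val
  apply Finset.filter_congr
  intro i _
  constructor
  · intro H h
    have H' := H h
    have h2 : ((T.symm ⟨i - 1, lt_of_le_of_lt (Nat.sub_le i 1) h⟩).1 : ℕ) < 2 :=
      (T.symm _).1.isLt
    constructor
    · rw [toPath, decide_eq_false_iff_not, Fin.ext_iff, Fin.val_zero]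
      omega
    · rw [toPath, decide_eq_true_eq, Fin.ext_iff, Fin.val_zero]
      omega
  · intro H h
    obtain ⟨H1, H2⟩ := H h
    rw [toPath, decide_eq_false_iff_not, Fin.ext_iff, Fin.val_zero] at H1
    rw [toPath, decide_eq_true_eq, Fin.ext_iff, Fin.val_zero] at H2
    have h2 : ((T.symm ⟨i - 1, lt_of_le_of_lt (Nat.sub_le i 1) h⟩).1 : ℕ) < 2 :=
      (T.symm _).1.isLt
    omega

open DyckStep in
/-- list of steps of a path. -/
def toL (s : Fin (2 * b) → Bool) : List DyckStep :=
  List.ofFn (fun i : Fin (2 * b) => if s i then U else D)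

lemma toL_length (s : Fin (2 * b) → Bool) : (toL s).length = 2 * b :=
  List.length_ofFn

open DyckStep in
lemma toL_count (s : Fin (2 * b) → Bool) {j : ℕ} (hj : j ≤ 2 * b) :
    ((toL s).take j).count U = cnt b s true j ∧ ((toL s).take j).count D = cnt b s false j := by
  induction j with
  | zero => simp [cnt]
  | succ n ih =>
      have hn : n < 2 * b := hj
      obtain ⟨ih1, ih2⟩ := ih (le_of_lt hn)
      have hlen : n < (toL s).length := by rw [toL_length]; exact hn
      have hts : (toL s).take (n + 1) = (toL s).take n ++ [(toL s)[n]] := by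
        rw [List.take_succ, List.getElem?_eq_getElem hlen]
        rfl
      have hget : (toL s)[n] = if s ⟨n, hn⟩ then U else D := by
        simp [toL]
      rw [hts, List.count_append, List.count_append, ih1, ih2, hget,
        cnt_succ, cnt_succ, sN_lt s hn]
      cases h : s ⟨n, hn⟩ <;> simp [h]

open DyckStep in
lemma toL_take_all (s : Fin (2 * b) → Bool) {j : ℕ} (hj : 2 * b ≤ j) :
    (toL s).take j = toL s :=
  List.take_of_length_le (by rw [toL_length]; exact hj)

open DyckStep in
lemma toL_getElem_eq (l : List DyckStep) (hl : l.length = 2 * b) :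
    toL (fun i : Fin (2 * b) => decide (l[(i : ℕ)]'(by rw [hl]; exact i.2) = U)) = l := by
  apply List.ext_getElem
  · rw [toL_length, hl]
  · intro k h1 h2
    rw [toL_length] at h1
    have h3 : (toL (fun i : Fin (2 * b) => decide (l[(i : ℕ)]'(by rw [hl]; exact i.2) = U)))[k]'
        (by rw [toL_length]; exact h1)
        = if decide (l[k]'h2 = U) then U else D := by
      simp [toL]
    rw [h3]
    rcases (l[k]'h2).dichotomy with h | h <;> simp [h]

open DyckStep in
/-- equivalence between Dyck paths and Dyck words of semilength `b`. -/
noncomputable def pathEquivDyckWord :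
    {s : Fin (2 * b) → Bool // IsDyck b s} ≃ {p : DyckWord // p.semilength = b} where
  toFun := fun ⟨s, hs⟩ =>
    ⟨⟨toL s, by
        have h := toL_count s (le_refl (2 * b))
        rw [toL_take_all s (le_refl _)] at h
        rw [h.1, h.2, dyck_cnt_total s hs, dyck_cnt_total s hs], by
        intro i
        rcases le_or_gt i (2 * b) with hi | hi
        · have h := toL_count s hi
          rw [h.1, h.2]
          exact dyck_prefix s hs hi
        · rw [toL_take_all s (le_of_lt hi)]
          have h := toL_count s (le_refl (2 * b))
          rw [toL_take_all s (le_refl _)] at h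
          rw [h.1, h.2, dyck_cnt_total s hs, dyck_cnt_total s hs]⟩, by
      show (toL s).count U = b
      have h := toL_count s (le_refl (2 * b))
      rw [toL_take_all s (le_refl _)] at h
      rw [h.1, dyck_cnt_total s hs]⟩
  invFun := fun ⟨p, hp⟩ =>
    ⟨fun i => decide (p.toList[(i : ℕ)]'(by
        rw [← DyckWord.two_mul_semilength_eq_length, hp]; exact i.2) = U), by
      set s : Fin (2 * b) → Bool := fun i => decide (p.toList[(i : ℕ)]'(by
        rw [← DyckWord.two_mul_semilength_eq_length, hp]; exact i.2) = U) with hsdef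
      have hplen : p.toList.length = 2 * b := by
        rw [← DyckWord.two_mul_semilength_eq_length, hp]
      have hL : toL s = p.toList := toL_getElem_eq p.toList hplen
      constructor
      · rw [dhgt_eq s _ (le_refl _)]
        have h := toL_count s (le_refl (2 * b))
        rw [toL_take_all s (le_refl _), hL] at h
        rw [← h.1, ← h.2]
        have := p.count_U_eq_count_D
        omega
      · intro j hj
        rw [dhgt_eq s j hj]
        have h := toL_count s hj
        rw [hL] at h
        rw [← h.1, ← h.2]
        have := p.count_D_le_count_U j
        omega⟩
  left_inv := fun ⟨s, hs⟩ => by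
    apply Subtype.ext
    funext i
    simp only
    have h1 : (toL s)[(i : ℕ)]'(by rw [toL_length]; exact i.2) = if s i then U else D := by
      simp [toL]
    rw [h1]
    cases h : s i <;> simp [h]
  right_inv := fun ⟨p, hp⟩ => by
    apply Subtype.ext
    apply DyckWord.ext
    exact toL_getElem_eq p.toList (by rw [← DyckWord.two_mul_semilength_eq_length, hp])


lemma card_eq : Nat.card {T : Fin 2 × Fin b ≃ Fin (2 * b) // IsSYT2 b T}
    = (2 * b).choose b / (b + 1) := by
  have e1 : {T : Fin 2 × Fin b ≃ Fin (2 * b) // IsSYT2 b T} ≃ {s : Fin (2 * b) → Bool // IsDyck b s} :=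
    Set.BijOn.equiv (toPath b) bijOn
  rw [Nat.card_congr e1, Nat.card_congr pathEquivDyckWord, Nat.card_eq_fintype_card,
    DyckWord.card_dyckWord_semilength_eq_catalan, catalan_eq_centralBinom_div,
    Nat.centralBinom]

end SYT18

/-- `toPath` is a bijection from SYTs of shape `2×b` onto Dyck paths of
length `2b`, descents correspond to valleys, and the number of SYTs of shape `2×b`
equals the Catalan number `binom(2b,b)/(b+1)`. -/
theorem stmt_18 (b : ℕ) :
    Set.BijOn (toPath b) {T | IsSYT2 b T} {s | IsDyck b s} ∧
      (∀ T : Fin 2 × Fin b ≃ Fin (2 * b), IsSYT2 b T → DesT b T = Val b (toPath b T)) ∧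
      Nat.card {T : Fin 2 × Fin b ≃ Fin (2 * b) // IsSYT2 b T}
        = (2 * b).choose b / (b + 1) := by
  exact ⟨SYT18.bijOn, fun T _ => SYT18.des_eq_val T, SYT18.card_eq⟩
end
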